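/- arXiv:1405.0317 — 4 statements merged into one kernel-verified Lean document; each statement's English description precedes it below -/
import Mathlib

section
/- Consider the Cucker–Smale system with random failures: k ≥ 2 agents with positions X_i(t) ∈ ℝ³ and velocities V_i(t) ∈ ℝ³ evolving by X_i(t+h) = X_i(t) + h V_i(t) and V_i(t+h) = V_i(t) + h Σ_{j=1}^k a_{ij}(t)(V_j(t) − V_i(t)), where 0 < h ≤ 1/k and a_{ij}(t) = ζ^{ij}_t (1 + ‖X_i(t) − X_j(t)‖)^{−α} for i ≠ j, with symmetric failure variables ζ^{ij}_t = ζ^{ji}_t that are i.i.d. Bernoulli over pairs {i,j} and time steps t, with P(ζ^{ij}_t = 1) = 1 − λ and P(ζ^{ij}_t = 0) = λ for a fixed failure rate λ ∈ (0,1). If 0 ≤ α < 1, then almost surely: (a) the velocities converge to the common initial mean velocity, i.e. V_i(th) → V̄(0) as t → ∞ for every i, where V̄(0) = (1/k)Σ_{j=1}^k V_j(0); and (b) there exists a limiting configuration (x̂_1,…,x̂_k) ∈ (ℝ³)^k such that X_i(th) − X̄(th) → x̂_i as t → ∞ for every i, where X̄(t) = (1/k)Σ_{j=1}^k X_j(t).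 -/
open scoped BigOperators
open MeasureTheory ProbabilityTheory Filter
open Finset

lemma scalar_step {k : ℕ} (h θ : ℝ) (hh0 : 0 ≤ h) (hhk : h * k ≤ 1)
    (hθ0 : 0 ≤ θ) (hθ1 : θ ≤ 1)
    (a : Fin k → Fin k → ℝ) (ha0 : ∀ i j, 0 ≤ a i j) (ha1 : ∀ i j, a i j ≤ 1)
    (haθ : ∀ i j, i ≠ j → θ ≤ a i j)
    (v v' : Fin k → ℝ)
    (hv' : ∀ i, v' i = v i + h * ∑ j, a i j * (v j - v i))
    (M m : ℝ) (hM : ∀ j, v j ≤ M) (hm : ∀ j, m ≤ v j)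
    (j₀ : Fin k) (hj₀ : v j₀ = m) :
    ∀ i, v' i ≤ M - (h * θ) * (M - m) := by
  intro i
  have hmM : m ≤ M := (hj₀ ▸ hM j₀)
  have hk1 : (1:ℝ) ≤ k := by
    have : (0:ℕ) < k := Fin.pos i
    exact_mod_cast this
  have hsum : ∑ j, a i j * (v j - v i) = ∑ j ∈ univ.erase i, a i j * (v j - v i) := by
    rw [← Finset.sum_erase_add _ _ (Finset.mem_univ i)]
    simp
  set A := ∑ j ∈ univ.erase i, a i j with hAdef
  have hA : A ≤ (k:ℝ) - 1 := by
    have := Finset.sum_le_card_nsmul (univ.erase i) (fun j => a i j) 1 (fun j _ => ha1 i j)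
    have hcard : (univ.erase i).card = k - 1 := by
      simp [Finset.card_erase_of_mem, Finset.card_univ]
    rw [hcard, nsmul_eq_mul, mul_one] at this
    calc A ≤ ((k-1 : ℕ) : ℝ) := this
    _ ≤ (k:ℝ) - 1 := by
      have h1 : (1:ℕ) ≤ k := by exact_mod_cast hk1
      push_cast [h1]
      ring_nf
      exact le_refl _
  have hw0 : h ≤ 1 - h * A := by nlinarith
  have hsplit : ∑ j ∈ univ.erase i, a i j * (v j - v i)
      = (∑ j ∈ univ.erase i, a i j * v j) - A * v i := by
    rw [hAdef, Finset.sum_mul, ← Finset.sum_sub_distrib]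
    congr 1; ext j; ring
  have key : v' i - M = (1 - h * A) * (v i - M) + h * ∑ j ∈ univ.erase i, a i j * (v j - M) := by
    rw [hv' i, hsum, hsplit]
    have hsplit2 : ∑ j ∈ univ.erase i, a i j * (v j - M)
        = (∑ j ∈ univ.erase i, a i j * v j) - A * M := by
      rw [hAdef, Finset.sum_mul, ← Finset.sum_sub_distrib]
      congr 1; ext j; ring
    rw [hsplit2]; ring
  have hθh : h * θ ≤ 1 - h * A := by nlinarith
  rcases eq_or_ne j₀ i with rfl | hji
  · have h1 : (1 - h * A) * (v j₀ - M) ≤ -((h*θ) * (M - m)) := by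
      rw [hj₀]; nlinarith
    have h2 : ∑ j ∈ univ.erase j₀, a j₀ j * (v j - M) ≤ 0 :=
      Finset.sum_nonpos fun j _ => mul_nonpos_of_nonneg_of_nonpos (ha0 _ _) (by linarith [hM j])
    nlinarith [key]
  · have hj₀mem : j₀ ∈ univ.erase i := Finset.mem_erase.2 ⟨hji, Finset.mem_univ _⟩
    have h2 : ∑ j ∈ univ.erase i, a i j * (v j - M) ≤ a i j₀ * (m - M) := by
      rw [← Finset.add_sum_erase _ _ hj₀mem, hj₀]
      have : ∑ j ∈ (univ.erase i).erase j₀, a i j * (v j - M) ≤ 0 :=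
        Finset.sum_nonpos fun j _ => mul_nonpos_of_nonneg_of_nonpos (ha0 _ _) (by linarith [hM j])
      linarith
    have h3 : a i j₀ * (m - M) ≤ θ * (m - M) := by
      have := haθ i j₀ (Ne.symm hji)
      nlinarith
    have h1 : (1 - h * A) * (v i - M) ≤ 0 :=
      mul_nonpos_of_nonneg_of_nonpos (by linarith) (by linarith [hM i])
    nlinarith [key]

lemma scalar_step_lower {k : ℕ} (h θ : ℝ) (hh0 : 0 ≤ h) (hhk : h * k ≤ 1)
    (hθ0 : 0 ≤ θ) (hθ1 : θ ≤ 1)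
    (a : Fin k → Fin k → ℝ) (ha0 : ∀ i j, 0 ≤ a i j) (ha1 : ∀ i j, a i j ≤ 1)
    (haθ : ∀ i j, i ≠ j → θ ≤ a i j)
    (v v' : Fin k → ℝ)
    (hv' : ∀ i, v' i = v i + h * ∑ j, a i j * (v j - v i))
    (M m : ℝ) (hM : ∀ j, v j ≤ M) (hm : ∀ j, m ≤ v j)
    (j₁ : Fin k) (hj₁ : v j₁ = M) :
    ∀ i, m + (h * θ) * (M - m) ≤ v' i := by
  have hv'' : ∀ i, (fun i => -v' i) i = (fun i => -v i) i
      + h * ∑ j, a i j * ((fun i => -v i) j - (fun i => -v i) i) := by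
    intro i
    have : ∑ j, a i j * (-v j - -v i) = -∑ j, a i j * (v j - v i) := by
      rw [← Finset.sum_neg_distrib]
      apply Finset.sum_congr rfl; intro j _; ring
    simp only [this, hv' i]; ring
  have := scalar_step h θ hh0 hhk hθ0 hθ1 a ha0 ha1 haθ _ _ hv''
    (-m) (-M) (fun j => neg_le_neg (hm j)) (fun j => neg_le_neg (hM j)) j₁ (by rw [hj₁])
  intro i
  have hi := this i
  linarith

lemma esum_apply {n : ℕ} {β : Type*} [Fintype β] (f : β → EuclideanSpace ℝ (Fin n)) (c : Fin n) :
    (∑ j, f j) c = ∑ j, f j c := by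
  classical
  induction (univ : Finset β) using Finset.induction_on with
  | empty => simp
  | insert a s h ih => rw [Finset.sum_insert h, Finset.sum_insert h, PiLp.add_apply, ih]

lemma enorm_le_sum_abs {n : ℕ} (x : EuclideanSpace ℝ (Fin n)) : ‖x‖ ≤ ∑ c, |x c| := by
  rw [EuclideanSpace.norm_eq]
  have h1 : ∑ c, ‖x c‖^2 ≤ (∑ c, |x c|)^2 := by
    simpa [Real.norm_eq_abs] using
      Finset.sum_sq_le_sq_sum_of_nonneg (f := fun c => |x c|) (s := univ) (fun c _ => abs_nonneg _)
  calc Real.sqrt (∑ c, ‖x c‖^2) ≤ Real.sqrt ((∑ c, |x c|)^2) := Real.sqrt_le_sqrt h1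
  _ = ∑ c, |x c| := Real.sqrt_sq (Finset.sum_nonneg fun c _ => abs_nonneg _)

lemma eabs_le_norm {n : ℕ} (x : EuclideanSpace ℝ (Fin n)) (c : Fin n) : |x c| ≤ ‖x‖ := by
  rw [EuclideanSpace.norm_eq]
  have : |x c| = Real.sqrt (‖x c‖^2) := by
    rw [Real.sqrt_sq_eq_abs, Real.norm_eq_abs, abs_abs]
  rw [this]
  apply Real.sqrt_le_sqrt
  exact Finset.single_le_sum (f := fun c => ‖x c‖^2) (fun c _ => sq_nonneg _) (mem_univ c)

lemma summable_exp_neg_rpow {β p : ℝ} (hβ : 0 < β) (hp : 0 < p) :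
    Summable (fun T : ℕ => Real.exp (-(β * (T:ℝ)^p))) := by
  set n : ℕ := ⌈2/p⌉₊ with hn
  have hn2 : 2/p ≤ (n:ℝ) := Nat.le_ceil _
  have hnp : 2 ≤ (n:ℝ) * p := by
    rw [div_le_iff₀ hp] at hn2; linarith
  have hn0 : 0 < (n:ℝ) := by nlinarith
  have hexp : ∀ x : ℝ, 0 ≤ x → (x/n)^n ≤ Real.exp x := by
    intro x hx
    have h1 : (x/n)^n ≤ (1 + x/n)^n := by
      apply pow_le_pow_left₀ (by positivity); linarith
    have h2 : (1 + x/n)^n ≤ (Real.exp (x/n))^n := by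
      apply pow_le_pow_left₀ (by positivity)
      linarith [Real.add_one_le_exp (x/n)]
    have h3 : (Real.exp (x/n))^n = Real.exp x := by
      rw [← Real.exp_nat_mul]
      congr 1; field_simp
    linarith
  have key : ∀ T : ℕ, 1 ≤ T →
      Real.exp (-(β * (T:ℝ)^p)) ≤ ((n:ℝ)/β)^n * (((T:ℝ))^((n:ℝ)*p))⁻¹ := by
    intro T hT
    have hT0 : (0:ℝ) < (T:ℝ) := by exact_mod_cast hT
    have hTp : (0:ℝ) < (T:ℝ)^p := Real.rpow_pos_of_pos hT0 p
    have hx := hexp (β * (T:ℝ)^p) (by positivity)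
    rw [Real.exp_neg]
    have hinv : (Real.exp (β * (T:ℝ)^p))⁻¹ ≤ ((β * (T:ℝ)^p / n)^n)⁻¹ := by
      apply inv_anti₀ (by positivity) hx
    have hTn : ((T:ℝ)^p)^n = (T:ℝ)^((n:ℝ)*p) := by
      rw [← Real.rpow_natCast ((T:ℝ)^p) n, ← Real.rpow_mul hT0.le, mul_comm]
    have h4 : ((β * (T:ℝ)^p / n)^n)⁻¹ = ((n:ℝ)/β)^n * (((T:ℝ)^p)^n)⁻¹ := by
      ring_nf
      rw [inv_inv]
      ring
    rw [h4, hTn] at hinv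
    exact hinv
  apply (summable_nat_add_iff 1).mp
  apply Summable.of_nonneg_of_le (fun T => (Real.exp_pos _).le)
    (fun T => key (T+1) (by omega))
  apply Summable.mul_left
  exact (summable_nat_add_iff (f := fun T : ℕ => (((T:ℕ):ℝ)^((n:ℝ)*p))⁻¹) 1).mpr
    (Real.summable_nat_rpow_inv.mpr (by nlinarith))

set_option maxHeartbeats 2000000 in
lemma det_flocking {k : ℕ} (hk : 2 ≤ k) (h α : ℝ) (hh0 : 0 < h) (hhk : h ≤ 1 / k)
    (hα0 : 0 ≤ α) (hα1 : α < 1)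
    (ζd : ℕ → Fin k → Fin k → ℝ)
    (hsymm : ∀ t i j, ζd t i j = ζd t j i)
    (hval : ∀ t i j, ζd t i j = 0 ∨ ζd t i j = 1)
    (Xt Vt : ℕ → Fin k → EuclideanSpace ℝ (Fin 3))
    (hdX : ∀ t i, Xt (t+1) i = Xt t i + h • Vt t i)
    (hdV : ∀ t i, Vt (t+1) i = Vt t i +
      h • ∑ j, (ζd t i j * (1 + ‖Xt t i - Xt t j‖) ^ (-α)) • (Vt t j - Vt t i))
    (γ : ℝ) (hγ : 0 < γ) (T₀ : ℕ)
    (hgood : ∀ T, T₀ ≤ T →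
      γ * T ≤ ∑ t ∈ Finset.range T, (if (∀ i j, i ≠ j → ζd t i j = 1) then (1:ℝ) else 0)) :
    (∀ i, Tendsto (fun t => Vt t i) atTop (nhds ((k:ℝ)⁻¹ • ∑ j, Vt 0 j))) ∧
    ∃ xhat : Fin k → EuclideanSpace ℝ (Fin 3),
      ∀ i, Tendsto (fun t => Xt t i - (k:ℝ)⁻¹ • ∑ j, Xt t j) atTop (nhds (xhat i)) := by
  classical
  have hkR : (0:ℝ) < k := by positivity
  have hhk' : h * k ≤ 1 := by
    rw [le_div_iff₀ hkR] at hhk; linarith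
  have hk2R : (2:ℝ) ≤ k := by exact_mod_cast hk
  have h2h : 2*h ≤ 1 := by nlinarith
  have hbase : ∀ t (i j : Fin k), (1:ℝ) ≤ 1 + ‖Xt t i - Xt t j‖ := by
    intro t i j; have := norm_nonneg (Xt t i - Xt t j); linarith
  have ha0 : ∀ t (i j : Fin k), 0 ≤ ζd t i j * (1 + ‖Xt t i - Xt t j‖) ^ (-α) := by
    intro t i j
    apply mul_nonneg
    · rcases hval t i j with h1 | h1 <;> rw [h1] <;> norm_num
    · exact Real.rpow_nonneg (by linarith [hbase t i j]) _
  have ha1 : ∀ t (i j : Fin k), ζd t i j * (1 + ‖Xt t i - Xt t j‖) ^ (-α) ≤ 1 := by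
    intro t i j
    have hr : (1 + ‖Xt t i - Xt t j‖) ^ (-α) ≤ 1 :=
      Real.rpow_le_one_of_one_le_of_nonpos (hbase t i j) (by linarith)
    have hr0 : (0:ℝ) ≤ (1 + ‖Xt t i - Xt t j‖) ^ (-α) :=
      Real.rpow_nonneg (by linarith [hbase t i j]) _
    rcases hval t i j with h1 | h1 <;> rw [h1]
    · norm_num
    · rw [one_mul]; exact hr
  set a : ℕ → Fin k → Fin k → ℝ :=
    fun t i j => ζd t i j * (1 + ‖Xt t i - Xt t j‖) ^ (-α) with ha_def
  set v : Fin 3 → ℕ → Fin k → ℝ := fun c t i => Vt t i c with hv_def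
  have hvd : ∀ c t i, v c (t+1) i = v c t i + h * ∑ j, a t i j * (v c t j - v c t i) := by
    intro c t i
    have := congrArg (fun z : EuclideanSpace ℝ (Fin 3) => z c) (hdV t i)
    simpa [hv_def, PiLp.add_apply, PiLp.smul_apply, PiLp.sub_apply, esum_apply,
      smul_eq_mul, ha_def] using this
  have hne : (univ : Finset (Fin k)).Nonempty := ⟨⟨0, by omega⟩, mem_univ _⟩
  set sb : Fin 3 → ℕ → ℝ := fun c t => univ.sup' hne (v c t) with hsb_def
  set ib : Fin 3 → ℕ → ℝ := fun c t => univ.inf' hne (v c t) with hib_def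
  have hvs : ∀ c t i, v c t i ≤ sb c t := fun c t i => Finset.le_sup' (v c t) (mem_univ i)
  have hvi : ∀ c t i, ib c t ≤ v c t i := fun c t i => Finset.inf'_le (v c t) (mem_univ i)
  have hd0 : ∀ c t, ib c t ≤ sb c t := by
    intro c t
    obtain ⟨i⟩ : Nonempty (Fin k) := ⟨⟨0, by omega⟩⟩
    exact le_trans (hvi c t i) (hvs c t i)
  have main_step : ∀ t (θ : ℝ), 0 ≤ θ → θ ≤ 1 → (∀ i j, i ≠ j → θ ≤ a t i j) →
      ∀ c, sb c (t+1) ≤ sb c t - (h*θ) * (sb c t - ib c t) ∧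
        ib c t + (h*θ) * (sb c t - ib c t) ≤ ib c (t+1) := by
    intro t θ hθ0 hθ1 haθ c
    obtain ⟨j₀, -, hj₀⟩ := Finset.exists_mem_eq_inf' hne (v c t)
    obtain ⟨j₁, -, hj₁⟩ := Finset.exists_mem_eq_sup' hne (v c t)
    have hup := scalar_step h θ hh0.le hhk' hθ0 hθ1 (a t) (ha0 t) (ha1 t) haθ
      (v c t) (v c (t+1)) (hvd c t) (sb c t) (ib c t) (hvs c t) (hvi c t) j₀ hj₀.symm
    have hlo := scalar_step_lower h θ hh0.le hhk' hθ0 hθ1 (a t) (ha0 t) (ha1 t) haθ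
      (v c t) (v c (t+1)) (hvd c t) (sb c t) (ib c t) (hvs c t) (hvi c t) j₁ hj₁.symm
    constructor
    · exact Finset.sup'_le hne _ fun i _ => hup i
    · exact Finset.le_inf' hne _ fun i _ => hlo i
  have hzero : ∀ t (i j : Fin k), i ≠ j → (0:ℝ) ≤ a t i j := fun t i j _ => ha0 t i j
  have hs_step : ∀ c t, sb c (t+1) ≤ sb c t := by
    intro c t
    have := (main_step t 0 le_rfl zero_le_one (hzero t) c).1
    simpa using this
  have hi_step : ∀ c t, ib c t ≤ ib c (t+1) := by
    intro c t
    have := (main_step t 0 le_rfl zero_le_one (hzero t) c).2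
    simpa using this
  have hs_mono : ∀ c, Antitone (sb c) := fun c => antitone_nat_of_succ_le (hs_step c)
  have hi_mono : ∀ c, Monotone (ib c) := fun c => monotone_nat_of_le_succ (hi_step c)
  set Bv : ℝ := ∑ l, ‖Vt 0 l‖ with hBv_def
  have hBv0 : 0 ≤ Bv := Finset.sum_nonneg fun l _ => norm_nonneg _
  have hsb0 : ∀ c, sb c 0 ≤ Bv := by
    intro c
    apply Finset.sup'_le
    intro i _
    calc v c 0 i ≤ |v c 0 i| := le_abs_self _
    _ ≤ ‖Vt 0 i‖ := eabs_le_norm _ c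
    _ ≤ Bv := Finset.single_le_sum (f := fun l => ‖Vt 0 l‖) (fun l _ => norm_nonneg _) (mem_univ i)
  have hib0 : ∀ c, -Bv ≤ ib c 0 := by
    intro c
    apply Finset.le_inf'
    intro i _
    have h1 : -v c 0 i ≤ |v c 0 i| := neg_le_abs _
    have h2 : |v c 0 i| ≤ ‖Vt 0 i‖ := eabs_le_norm _ c
    have h3 : ‖Vt 0 i‖ ≤ Bv :=
      Finset.single_le_sum (f := fun l => ‖Vt 0 l‖) (fun l _ => norm_nonneg _) (mem_univ i)
    linarith
  have hVdiff : ∀ t (i j : Fin k), ‖Vt t i - Vt t j‖ ≤ 6 * Bv := by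
    intro t i j
    calc ‖Vt t i - Vt t j‖ ≤ ∑ c, |(Vt t i - Vt t j) c| := enorm_le_sum_abs _
    _ ≤ ∑ c : Fin 3, 2 * Bv := by
      apply Finset.sum_le_sum
      intro c _
      have hc : (Vt t i - Vt t j) c = v c t i - v c t j := by
        simp [hv_def, PiLp.sub_apply]
      rw [hc, abs_sub_le_iff]
      have h1 := hvs c t i; have h2 := hvi c t j
      have h3 := hvs c t j; have h4 := hvi c t i
      have h5 := hs_mono c (Nat.zero_le t); have h6 := hi_mono c (Nat.zero_le t)
      have h7 := hsb0 c; have h8 := hib0 c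
      constructor <;> linarith
    _ = 6 * Bv := by simp; ring
  set C0 : ℝ := 2 * ∑ l, ‖Xt 0 l‖ with hC0_def
  have hC00 : 0 ≤ C0 := by positivity
  set C1 : ℝ := 6 * h * Bv with hC1_def
  have hC10 : 0 ≤ C1 := by positivity
  have hXb : ∀ t (i j : Fin k), ‖Xt t i - Xt t j‖ ≤ C0 + C1 * t := by
    intro t
    induction t with
    | zero =>
      intro i j
      simp only [Nat.cast_zero, mul_zero, add_zero]
      calc ‖Xt 0 i - Xt 0 j‖ ≤ ‖Xt 0 i‖ + ‖Xt 0 j‖ := norm_sub_le _ _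
      _ ≤ C0 := by
        rw [hC0_def, two_mul]
        gcongr <;>
          exact Finset.single_le_sum (f := fun l => ‖Xt 0 l‖) (fun l _ => norm_nonneg _)
            (mem_univ _)
    | succ t ih =>
      intro i j
      have : Xt (t+1) i - Xt (t+1) j = (Xt t i - Xt t j) + h • (Vt t i - Vt t j) := by
        rw [hdX t i, hdX t j, smul_sub]; abel
      rw [this]
      calc ‖(Xt t i - Xt t j) + h • (Vt t i - Vt t j)‖
          ≤ ‖Xt t i - Xt t j‖ + ‖h • (Vt t i - Vt t j)‖ := norm_add_le _ _
      _ ≤ (C0 + C1 * t) + h * (6 * Bv) := by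
        have h1 := ih i j
        have h2 : ‖h • (Vt t i - Vt t j)‖ = h * ‖Vt t i - Vt t j‖ := by
          rw [norm_smul, Real.norm_eq_abs, abs_of_pos hh0]
        rw [h2]
        have := hVdiff t i j
        have : h * ‖Vt t i - Vt t j‖ ≤ h * (6 * Bv) := by
          apply mul_le_mul_of_nonneg_left _ hh0.le; linarith
        linarith
      _ = C0 + C1 * (t+1 : ℕ) := by push_cast [hC1_def]; ring
  set c2 : ℝ := (1 + C0 + C1) ^ (-α) with hc2_def
  have hc20 : 0 < c2 := Real.rpow_pos_of_pos (by linarith) _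
  have hc21 : c2 ≤ 1 := Real.rpow_le_one_of_one_le_of_nonpos (by linarith) (by linarith)
  set Good : ℕ → Prop := fun t => ∀ i j : Fin k, i ≠ j → ζd t i j = 1 with hGood_def
  set θf : ℕ → ℝ := fun t => if Good t then c2 * ((1:ℝ)+t) ^ (-α) else 0 with hθf_def
  have hrpow_pos : ∀ t : ℕ, (0:ℝ) < ((1:ℝ)+t) ^ (-α) :=
    fun t => Real.rpow_pos_of_pos (by positivity) _
  have hrpow_le1 : ∀ t : ℕ, ((1:ℝ)+t) ^ (-α) ≤ 1 :=
    fun t => Real.rpow_le_one_of_one_le_of_nonpos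
      (le_add_of_nonneg_right (Nat.cast_nonneg t)) (by linarith)
  have hθf0 : ∀ t, 0 ≤ θf t := by
    intro t; rw [hθf_def]; dsimp only
    split
    · exact le_of_lt (mul_pos hc20 (hrpow_pos t))
    · exact le_rfl
  have hθf1 : ∀ t, θf t ≤ 1 := by
    intro t; rw [hθf_def]; dsimp only
    split
    · have := mul_le_mul hc21 (hrpow_le1 t) (hrpow_pos t).le zero_le_one
      simpa using this
    · norm_num
  have hθfa : ∀ t (i j : Fin k), i ≠ j → θf t ≤ a t i j := by
    intro t i j hij
    rw [hθf_def]; dsimp only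
    split
    · rename_i hg
      have hζ1 : ζd t i j = 1 := hg i j hij
      have h1 : a t i j = (1 + ‖Xt t i - Xt t j‖) ^ (-α) := by
        rw [ha_def]; dsimp only; rw [hζ1, one_mul]
      rw [h1]
      have h2 : (1 + ‖Xt t i - Xt t j‖) ≤ (1 + C0 + C1) * ((1:ℝ)+t) := by
        have := hXb t i j
        have ht0 : (0:ℝ) ≤ (t:ℝ) := Nat.cast_nonneg t
        nlinarith
      calc c2 * ((1:ℝ)+t) ^ (-α) = ((1 + C0 + C1) * ((1:ℝ)+t)) ^ (-α) := by
            rw [hc2_def, ← Real.mul_rpow (by linarith) (by positivity)]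
      _ ≤ (1 + ‖Xt t i - Xt t j‖) ^ (-α) :=
            Real.rpow_le_rpow_of_nonpos (by linarith [hbase t i j]) h2 (by linarith)
    · exact ha0 t i j
  set δ : Fin 3 → ℕ → ℝ := fun c t => sb c t - ib c t with hδ_def
  have hδ0 : ∀ c t, 0 ≤ δ c t := fun c t => by
    have := hd0 c t; rw [hδ_def]; dsimp only; linarith
  have hcontr : ∀ c t, δ c (t+1) ≤ (1 - 2*h*θf t) * δ c t := by
    intro c t
    obtain ⟨h1, h2⟩ := main_step t (θf t) (hθf0 t) (hθf1 t) (fun i j hij => hθfa t i j hij) c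
    rw [hδ_def]; dsimp only; nlinarith [hδ0 c t]
  have hδ_exp : ∀ c T, δ c T ≤ δ c 0 * Real.exp (-(2*h * ∑ t ∈ range T, θf t)) := by
    intro c T
    induction T with
    | zero => simp
    | succ T ih =>
      have hθT := hθf0 T
      have hfac0 : 0 ≤ 1 - 2*h*θf T := by nlinarith [hθf1 T, hθf0 T]
      calc δ c (T+1) ≤ (1 - 2*h*θf T) * δ c T := hcontr c T
      _ ≤ Real.exp (-(2*h*θf T)) * δ c T := by
        have := Real.add_one_le_exp (-(2*h*θf T))
        nlinarith [hδ0 c T]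
      _ ≤ Real.exp (-(2*h*θf T)) * (δ c 0 * Real.exp (-(2*h * ∑ t ∈ range T, θf t))) := by
        apply mul_le_mul_of_nonneg_left ih (Real.exp_pos _).le
      _ = δ c 0 * Real.exp (-(2*h * ∑ t ∈ range (T+1), θf t)) := by
        rw [Finset.sum_range_succ]
        rw [show -(2*h*(∑ x ∈ range T, θf x + θf T))
            = -(2*h*θf T) + -(2*h*∑ x ∈ range T, θf x) by ring, Real.exp_add]
        ring
  set β : ℝ := 2*h*γ*c2*(2:ℝ)^(-α) with hβ_def
  have hβ0 : 0 < β := by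
    have : (0:ℝ) < (2:ℝ)^(-α) := Real.rpow_pos_of_pos (by norm_num) _
    rw [hβ_def]; positivity
  have hS : ∀ T : ℕ, T₀ ≤ T → 1 ≤ T → β * (T:ℝ)^(1-α) ≤ 2*h * ∑ t ∈ range T, θf t := by
    intro T hT0 hT1
    have hTR : (1:ℝ) ≤ (T:ℝ) := by exact_mod_cast hT1
    have hTpos : (0:ℝ) < T := by linarith
    have hterm : ∀ t ∈ range T,
        c2 * ((1:ℝ)+T) ^ (-α) * (if Good t then (1:ℝ) else 0) ≤ θf t := by
      intro t ht
      rw [hθf_def]; dsimp only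
      by_cases hg : Good t
      · rw [if_pos hg, if_pos hg, mul_one]
        have htT : ((1:ℝ)+t) ≤ ((1:ℝ)+T) := by
          have : (t:ℝ) ≤ T := by exact_mod_cast (Finset.mem_range.mp ht).le
          linarith
        have := Real.rpow_le_rpow_of_nonpos (by positivity : (0:ℝ) < (1:ℝ)+t) htT
          (by linarith : -α ≤ 0)
        exact mul_le_mul_of_nonneg_left this hc20.le
      · rw [if_neg hg, if_neg hg, mul_zero]
    have hsum1 : c2 * ((1:ℝ)+T) ^ (-α) * (γ * T) ≤ ∑ t ∈ range T, θf t := by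
      have h1 := Finset.sum_le_sum hterm
      rw [← Finset.mul_sum] at h1
      have h2 : c2 * ((1:ℝ)+T) ^ (-α) * (γ * T)
          ≤ c2 * ((1:ℝ)+T) ^ (-α) * ∑ t ∈ range T, (if Good t then (1:ℝ) else 0) := by
        apply mul_le_mul_of_nonneg_left (hgood T hT0)
        exact mul_nonneg hc20.le (hrpow_pos T).le
      exact le_trans h2 h1
    have hsplit : (2:ℝ)^(-α) * (T:ℝ)^(-α) ≤ ((1:ℝ)+T) ^ (-α) := by
      rw [← Real.mul_rpow (by norm_num) hTpos.le]
      exact Real.rpow_le_rpow_of_nonpos (by linarith) (by linarith) (by linarith)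
    have hTrw : (T:ℝ)^(-α) * (T:ℝ) = (T:ℝ)^(1-α) := by
      nth_rewrite 2 [← Real.rpow_one (T:ℝ)]
      rw [← Real.rpow_add hTpos]
      ring_nf
    have hfin : β * (T:ℝ)^(1-α) ≤ 2*h * (c2 * ((1:ℝ)+T) ^ (-α) * (γ * T)) := by
      rw [hβ_def, ← hTrw]
      have hpows : (0:ℝ) < (T:ℝ)^(-α) := Real.rpow_pos_of_pos hTpos _
      nlinarith [mul_le_mul_of_nonneg_left hsplit
        (by positivity : (0:ℝ) ≤ 2*h*γ*c2*(T:ℝ))]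
    calc β * (T:ℝ)^(1-α) ≤ 2*h * (c2 * ((1:ℝ)+T) ^ (-α) * (γ * T)) := hfin
    _ ≤ 2*h * ∑ t ∈ range T, θf t := by
      apply mul_le_mul_of_nonneg_left hsum1 (by linarith)
  have hδ_bound : ∀ c T, T₀ ≤ T → 1 ≤ T → δ c T ≤ δ c 0 * Real.exp (-(β * (T:ℝ)^(1-α))) := by
    intro c T h1 h2
    calc δ c T ≤ δ c 0 * Real.exp (-(2*h * ∑ t ∈ range T, θf t)) := hδ_exp c T
    _ ≤ δ c 0 * Real.exp (-(β * (T:ℝ)^(1-α))) := by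
      apply mul_le_mul_of_nonneg_left _ (hδ0 c 0)
      apply Real.exp_le_exp.mpr
      have := hS T h1 h2
      linarith
  have hδ_summ : ∀ c, Summable (fun t => δ c t) := by
    intro c
    apply (summable_nat_add_iff (T₀ + 1)).mp
    have hb : Summable (fun t : ℕ => δ c 0 * Real.exp (-(β * ((t + (T₀+1) : ℕ):ℝ)^(1-α)))) := by
      apply (summable_nat_add_iff (f := fun T : ℕ =>
        δ c 0 * Real.exp (-(β * ((T:ℕ):ℝ)^(1-α)))) (T₀+1)).mpr
      exact (summable_exp_neg_rpow hβ0 (by linarith)).mul_left _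
    exact Summable.of_nonneg_of_le (fun t => hδ0 c (t + (T₀+1)))
      (fun t => hδ_bound c (t + (T₀+1)) (by omega) (by omega)) hb
-- conservation of the mean velocity
  have hcons : ∀ t, ∑ j, Vt (t+1) j = ∑ j, Vt t j := by
    intro t
    have hstep : ∀ i : Fin k, Vt (t+1) i = Vt t i + h • ∑ j, (a t i j) • (Vt t j - Vt t i) :=
      fun i => hdV t i
    rw [show ∑ j, Vt (t+1) j = ∑ i, (Vt t i + h • ∑ j, (a t i j) • (Vt t j - Vt t i)) from
      Finset.sum_congr rfl fun i _ => hstep i]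
    rw [Finset.sum_add_distrib]
    have hzero : ∑ i, h • ∑ j, (a t i j) • (Vt t j - Vt t i) = 0 := by
      rw [← Finset.smul_sum]
      have hasymm : ∀ i j : Fin k, (a t i j) • (Vt t j - Vt t i)
          = -((a t j i) • (Vt t i - Vt t j)) := by
        intro i j
        have h1 : a t i j = a t j i := by
          rw [ha_def]; dsimp only
          rw [hsymm t i j, norm_sub_rev]
        rw [h1, ← smul_neg, neg_sub]
      have hsum0 : ∑ i, ∑ j, (a t i j) • (Vt t j - Vt t i)
          = -∑ i, ∑ j, (a t i j) • (Vt t j - Vt t i) := by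
        nth_rewrite 2 [Finset.sum_comm]
        rw [← Finset.sum_neg_distrib]
        apply Finset.sum_congr rfl; intro i _
        rw [← Finset.sum_neg_distrib]
        apply Finset.sum_congr rfl; intro j _
        rw [hasymm i j]
      have h2 : (2:ℝ) • ∑ i, ∑ j, (a t i j) • (Vt t j - Vt t i) = 0 := by
        rw [two_smul]
        nth_rewrite 2 [hsum0]
        simp
      have := smul_eq_zero.mp h2
      rcases this with h3 | h3
      · norm_num at h3
      · rw [h3, smul_zero]
    rw [hzero, add_zero]
  have hconst : ∀ t, ∑ j, Vt t j = ∑ j, Vt 0 j := by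
    intro t
    induction t with
    | zero => rfl
    | succ t ih => rw [hcons t, ih]
  -- distance to the mean
  set Vbar : EuclideanSpace ℝ (Fin 3) := (k:ℝ)⁻¹ • ∑ j, Vt 0 j with hVbar_def
  have hmean_mem : ∀ c t, ib c t ≤ Vbar c ∧ Vbar c ≤ sb c t := by
    intro c t
    have hcoord : Vbar c = (k:ℝ)⁻¹ * ∑ j, v c t j := by
      rw [hVbar_def, ← hconst t, PiLp.smul_apply, smul_eq_mul, esum_apply]
    constructor
    · rw [hcoord]
      have h1 : (k:ℝ) * ib c t ≤ ∑ j, v c t j := by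
        have := Finset.card_nsmul_le_sum univ (v c t) (ib c t) (fun i _ => hvi c t i)
        simpa [nsmul_eq_mul, Finset.card_univ] using this
      have h2 := mul_le_mul_of_nonneg_left h1 (inv_nonneg.mpr hkR.le)
      rwa [← mul_assoc, inv_mul_cancel₀ hkR.ne', one_mul] at h2
    · rw [hcoord]
      have h1 : ∑ j, v c t j ≤ (k:ℝ) * sb c t := by
        have := Finset.sum_le_card_nsmul univ (v c t) (sb c t) (fun i _ => hvs c t i)
        simpa [nsmul_eq_mul, Finset.card_univ] using this
      have h2 := mul_le_mul_of_nonneg_left h1 (inv_nonneg.mpr hkR.le)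
      rwa [← mul_assoc, inv_mul_cancel₀ hkR.ne', one_mul] at h2
  have hWbound : ∀ t i, ‖Vt t i - Vbar‖ ≤ ∑ c, δ c t := by
    intro t i
    calc ‖Vt t i - Vbar‖ ≤ ∑ c, |(Vt t i - Vbar) c| := enorm_le_sum_abs _
    _ ≤ ∑ c, δ c t := by
      apply Finset.sum_le_sum
      intro c _
      have hc : (Vt t i - Vbar) c = v c t i - Vbar c := by simp [hv_def, PiLp.sub_apply]
      rw [hc, abs_sub_le_iff]
      obtain ⟨hm1, hm2⟩ := hmean_mem c t
      have h1 := hvs c t i; have h2 := hvi c t i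
      rw [hδ_def]
      constructor <;> [skip; skip] <;> dsimp only <;> linarith
  have hgsumm : Summable (fun t => ∑ c, δ c t) :=
    summable_sum fun c _ => hδ_summ c
  -- velocity convergence
  have hVconv : ∀ i, Tendsto (fun t => Vt t i) atTop (nhds Vbar) := by
    intro i
    rw [tendsto_iff_norm_sub_tendsto_zero]
    apply squeeze_zero (fun t => norm_nonneg _) (fun t => hWbound t i)
    exact hgsumm.tendsto_atTop_zero
  refine ⟨hVconv, ?_⟩
  -- positions relative to the center of mass
  set W : ℕ → Fin k → EuclideanSpace ℝ (Fin 3) := fun t i => Vt t i - Vbar with hW_def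
  have hWsumm : ∀ i, Summable (fun t => h • W t i) := by
    intro i
    apply Summable.of_norm
    apply Summable.of_nonneg_of_le (fun t => norm_nonneg _) (fun t => ?_) (hgsumm.mul_left h)
    show ‖h • W t i‖ ≤ h * ∑ c, δ c t
    rw [norm_smul, Real.norm_eq_abs, abs_of_pos hh0]
    exact mul_le_mul_of_nonneg_left (hWbound t i) hh0.le
  set Pt : ℕ → Fin k → EuclideanSpace ℝ (Fin 3) :=
    fun t i => Xt t i - (k:ℝ)⁻¹ • ∑ j, Xt t j with hPt_def
  have hPrec : ∀ t i, Pt (t+1) i = Pt t i + h • W t i := by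
    intro t i
    rw [hPt_def]; dsimp only
    rw [hdX t i]
    rw [show ∑ j, Xt (t+1) j = ∑ j, (Xt t j + h • Vt t j) from
      Finset.sum_congr rfl fun j _ => hdX t j]
    rw [Finset.sum_add_distrib, ← Finset.smul_sum, hW_def]; dsimp only
    rw [hVbar_def, ← hconst t]
    rw [smul_add, smul_comm ((k:ℝ)⁻¹) h, smul_sub h]
    abel
  have hPsum : ∀ t i, Pt t i = Pt 0 i + ∑ s ∈ range t, h • W s i := by
    intro t i
    induction t with
    | zero => simp
    | succ t ih => rw [hPrec t i, ih, Finset.sum_range_succ]; abel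
  refine ⟨fun i => Pt 0 i + ∑' s, h • W s i, fun i => ?_⟩
  have h1 : Tendsto (fun t => ∑ s ∈ range t, h • W s i) atTop (nhds (∑' s, h • W s i)) :=
    (hWsumm i).hasSum.tendsto_sum_nat
  have h2 : Tendsto (fun t => Pt 0 i + ∑ s ∈ range t, h • W s i) atTop
      (nhds (Pt 0 i + ∑' s, h • W s i)) := h1.const_add _
  have h3 : (fun t => Pt t i) = fun t => Pt 0 i + ∑ s ∈ range t, h • W s i := by
    funext t; exact hPsum t i
  rw [show (fun t => Xt t i - (k:ℝ)⁻¹ • ∑ j, Xt t j) = fun t => Pt t i from rfl, h3]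
  exact h2

set_option maxHeartbeats 1000000 in
lemma prob_good {k : ℕ} (hk : 2 ≤ k) (lam : ℝ) (hlam0 : 0 < lam) (hlam1 : lam < 1)
    {Ω : Type*} [MeasurableSpace Ω] (P : Measure Ω) [IsProbabilityMeasure P]
    (ζ : ℕ → Fin k → Fin k → Ω → ℝ)
    (hζmeas : ∀ t i j, Measurable (ζ t i j))
    (hζsymm : ∀ t i j, ζ t i j = ζ t j i)
    (hζform : ∀ t i j, i ≠ j → P {ω | ζ t i j ω = 1} = ENNReal.ofReal (1 - lam))
    (hζindep : iIndepFun
      (fun q : ℕ × {p : Fin k × Fin k // p.1 < p.2} => ζ q.1 q.2.1.1 q.2.1.2) P) :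
    ∀ᵐ ω ∂P, ∃ γ : ℝ, 0 < γ ∧ ∃ T₀ : ℕ, ∀ T, T₀ ≤ T →
      γ * T ≤ ∑ t ∈ Finset.range T,
        (if (∀ i j : Fin k, i ≠ j → ζ t i j ω = 1) then (1:ℝ) else 0) := by
  classical
  set PT := {p : Fin k × Fin k // p.1 < p.2} with hPT_def
  set m : ℕ := Fintype.card PT with hm_def
  set qR : ℝ := (1 - lam)^m with hq_def
  have h1lam : 0 < 1 - lam := by linarith
  have hq0 : 0 < qR := pow_pos h1lam m
  have hq1 : qR ≤ 1 := pow_le_one₀ h1lam.le (by linarith)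
  set A : ℕ → Set Ω := fun t => ⋂ p : PT, ζ t p.1.1 p.1.2 ⁻¹' {1} with hA_def
  have hAmeas : ∀ t, MeasurableSet (A t) := by
    intro t
    exact MeasurableSet.iInter fun p => (hζmeas t p.1.1 p.1.2) (measurableSet_singleton 1)
  have hAchar : ∀ t ω, ω ∈ A t ↔ (∀ i j : Fin k, i ≠ j → ζ t i j ω = 1) := by
    intro t ω
    rw [hA_def]
    simp only [Set.mem_iInter, Set.mem_preimage, Set.mem_singleton_iff]
    constructor
    · intro hp i j hij
      rcases lt_or_gt_of_ne hij with hlt | hgt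
      · exact hp ⟨(i, j), hlt⟩
      · have := hp ⟨(j, i), hgt⟩
        rw [hζsymm t j i] at this
        exact this
    · intro hall p
      exact hall p.1.1 p.1.2 (Fin.ne_of_lt p.2)
  -- measure of A t
  have hgroup : ∀ (S : Finset ℕ),
      P (⋂ t ∈ S, A t) = (ENNReal.ofReal (1-lam))^(m * S.card) := by
    intro S
    have h1 := hζindep.measure_inter_preimage_eq_mul (S ×ˢ (Finset.univ : Finset PT))
      (sets := fun _ => ({1} : Set ℝ)) (fun _ _ => measurableSet_singleton 1)
    have h2 : (⋂ i ∈ S ×ˢ (Finset.univ : Finset PT),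
        (fun ω => ζ i.1 i.2.1.1 i.2.1.2 ω) ⁻¹' {1}) = ⋂ t ∈ S, A t := by
      ext ω
      simp only [Set.mem_iInter, Set.mem_preimage, Set.mem_singleton_iff, Finset.mem_product,
        hA_def]
      constructor
      · intro hp t ht p
        exact hp (t, p) ⟨ht, Finset.mem_univ _⟩
      · intro hp q hq
        exact hp q.1 hq.1 q.2
    rw [h2] at h1
    rw [h1]
    have h3 : ∀ q : ℕ × PT, P ((fun ω => ζ q.1 q.2.1.1 q.2.1.2 ω) ⁻¹' {1})
        = ENNReal.ofReal (1-lam) := by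
      intro q
      have : ((fun ω => ζ q.1 q.2.1.1 q.2.1.2 ω) ⁻¹' {1}) = {ω | ζ q.1 q.2.1.1 q.2.1.2 ω = 1} := by
        ext ω; simp
      rw [this]
      exact hζform q.1 q.2.1.1 q.2.1.2 (Fin.ne_of_lt q.2.2)
    rw [Finset.prod_congr rfl (fun q _ => h3 q), Finset.prod_const, Finset.card_product,
      Finset.card_univ]
    rw [← hm_def, mul_comm]
  have hPA : ∀ t, P (A t) = (ENNReal.ofReal (1-lam))^m := by
    intro t
    have := hgroup {t}
    simpa using this
  have hPAr : ∀ t, (P (A t)).toReal = qR := by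
    intro t
    rw [hPA t, ENNReal.toReal_pow, ENNReal.toReal_ofReal h1lam.le, hq_def]
  have hPApair : ∀ s t, s ≠ t → (P (A s ∩ A t)).toReal = qR^2 := by
    intro s t hst
    have h1 := hgroup {s, t}
    have h2 : ⋂ x ∈ ({s, t} : Finset ℕ), A x = A s ∩ A t := by
      simp
    have h3 : ({s, t} : Finset ℕ).card = 2 := Finset.card_pair hst
    rw [h2, h3] at h1
    rw [h1, ENNReal.toReal_pow, ENNReal.toReal_ofReal h1lam.le, hq_def, ← pow_mul]
  -- indicators
  set Y : ℕ → Ω → ℝ := fun t => (A t).indicator (fun _ => (1:ℝ)) with hY_def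
  have hY01 : ∀ t ω, Y t ω = if (∀ i j : Fin k, i ≠ j → ζ t i j ω = 1) then (1:ℝ) else 0 := by
    intro t ω
    rw [hY_def]; dsimp only
    by_cases hω : ω ∈ A t
    · rw [Set.indicator_of_mem hω, if_pos ((hAchar t ω).mp hω)]
    · rw [Set.indicator_of_notMem hω, if_neg (fun hcon => hω ((hAchar t ω).mpr hcon))]
  have hYnonneg : ∀ t ω, 0 ≤ Y t ω := by
    intro t ω; rw [hY01]; split <;> norm_num
  have hYint : ∀ t, Integrable (Y t) P :=
    fun t => (integrable_const (1:ℝ)).indicator (hAmeas t)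
  have hYmul : ∀ s t, (fun ω => Y s ω * Y t ω) = (A s ∩ A t).indicator (fun _ => (1:ℝ)) := by
    intro s t
    funext ω
    by_cases hs : ω ∈ A s <;> by_cases ht : ω ∈ A t <;>
      simp [hY_def, Set.indicator_apply, Set.mem_inter_iff, hs, ht]
  have hYmulint : ∀ s t, Integrable (fun ω => Y s ω * Y t ω) P := by
    intro s t
    rw [hYmul]
    exact (integrable_const (1:ℝ)).indicator ((hAmeas s).inter (hAmeas t))
  have hEY : ∀ t, ∫ ω, Y t ω ∂P = qR := by
    intro t
    rw [hY_def]; dsimp only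
    rw [MeasureTheory.integral_indicator_const (1:ℝ) (hAmeas t)]
    rw [smul_eq_mul, mul_one, measureReal_def, hPAr t]
  have hEYY : ∀ s t, s ≠ t → ∫ ω, Y s ω * Y t ω ∂P = qR^2 := by
    intro s t hst
    rw [hYmul]
    rw [MeasureTheory.integral_indicator_const (1:ℝ) ((hAmeas s).inter (hAmeas t))]
    rw [smul_eq_mul, mul_one, measureReal_def, hPApair s t hst]
  have hEYY' : ∀ t, ∫ ω, Y t ω * Y t ω ∂P = qR := by
    intro t
    have : (fun ω => Y t ω * Y t ω) = Y t := by
      funext ω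
      rw [hY01]
      split <;> norm_num
    rw [this, hEY]
  -- the counting function
  set N : ℕ → Ω → ℝ := fun T ω => ∑ t ∈ range T, Y t ω with hN_def
  have hNint : ∀ T, Integrable (N T) P := by
    intro T
    rw [hN_def]
    exact integrable_finset_sum _ (fun t _ => hYint t)
  have hEN : ∀ T, ∫ ω, N T ω ∂P = T * qR := by
    intro T
    rw [hN_def]; dsimp only
    rw [MeasureTheory.integral_finset_sum _ (fun t _ => hYint t)]
    rw [Finset.sum_congr rfl (fun t _ => hEY t), Finset.sum_const, Finset.card_range,
      nsmul_eq_mul]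
  have hNsq : ∀ T, (fun ω => (N T ω)^2)
      = fun ω => ∑ s ∈ range T, ∑ t ∈ range T, Y s ω * Y t ω := by
    intro T
    funext ω
    rw [hN_def]; dsimp only
    rw [sq, Finset.sum_mul_sum]
  have hEN2 : ∀ T, ∫ ω, (N T ω)^2 ∂P = T * qR + ((T:ℝ)^2 - T) * qR^2 := by
    intro T
    rw [hNsq T]
    rw [MeasureTheory.integral_finset_sum _
      (fun s _ => integrable_finset_sum _ (fun t _ => hYmulint s t))]
    have hinner : ∀ s ∈ range T, ∫ ω, ∑ t ∈ range T, Y s ω * Y t ω ∂P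
        = qR + ((T:ℝ) - 1) * qR^2 := by
      intro s hs
      rw [MeasureTheory.integral_finset_sum _ (fun t _ => hYmulint s t)]
      rw [← Finset.add_sum_erase _ _ hs, hEYY' s]
      have : ∀ t ∈ (range T).erase s, ∫ ω, Y s ω * Y t ω ∂P = qR^2 := by
        intro t ht
        exact hEYY s t (Ne.symm (Finset.mem_erase.mp ht).1)
      rw [Finset.sum_congr rfl this, Finset.sum_const, Finset.card_erase_of_mem hs,
        Finset.card_range, nsmul_eq_mul]
      have hT1 : (1:ℕ) ≤ T := by
        rcases Nat.eq_zero_or_pos T with h0 | h0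
        · rw [h0] at hs; simp at hs
        · exact h0
      push_cast [hT1]
      ring
    rw [Finset.sum_congr rfl hinner, Finset.sum_const, Finset.card_range, nsmul_eq_mul]
    ring
  have hSqInt : ∀ T, Integrable (fun ω => (N T ω - qR*T)^2) P := by
    intro T
    have : (fun ω => (N T ω - qR*T)^2)
        = fun ω => (N T ω)^2 - (2*qR*T) * N T ω + (qR*T)^2 := by
      funext ω; ring
    rw [this]
    apply Integrable.add _ (integrable_const _)
    apply Integrable.sub
    · rw [hNsq T]
      exact integrable_finset_sum _
        (fun s _ => integrable_finset_sum _ (fun t _ => hYmulint s t))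
    · exact (hNint T).const_mul _
  have hNnonneg : ∀ T ω, 0 ≤ N T ω := by
    intro T ω
    rw [hN_def]
    exact Finset.sum_nonneg fun t _ => hYnonneg t ω
  have hVar : ∀ T, ∫ ω, (N T ω - qR*T)^2 ∂P ≤ T := by
    intro T
    have heq : (fun ω => (N T ω - qR*T)^2)
        = fun ω => ((N T ω)^2 - (2*qR*T) * N T ω) + (qR*T)^2 := by
      funext ω; ring
    have hN2i : Integrable (fun ω => (N T ω)^2) P := by
      rw [hNsq T]
      exact integrable_finset_sum _
        (fun s _ => integrable_finset_sum _ (fun t _ => hYmulint s t))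
    have hint1 : Integrable (fun ω => (N T ω)^2 - (2*qR*T) * N T ω) P :=
      hN2i.sub ((hNint T).const_mul _)
    have e1 : ∫ ω, (((N T ω)^2 - (2*qR*T) * N T ω) + (qR*T)^2) ∂P
        = (∫ ω, ((N T ω)^2 - (2*qR*T) * N T ω) ∂P) + (qR*T)^2 := by
      rw [MeasureTheory.integral_add hint1 (integrable_const _),
        MeasureTheory.integral_const]
      simp
    have e2 : ∫ ω, ((N T ω)^2 - (2*qR*T) * N T ω) ∂P
        = (∫ ω, (N T ω)^2 ∂P) - (2*qR*T) * ∫ ω, N T ω ∂P := by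
      rw [MeasureTheory.integral_sub hN2i ((hNint T).const_mul _),
        integral_const_mul]
    rw [heq, e1, e2, hEN2 T, hEN T]
    have hTnn : (0:ℝ) ≤ T := Nat.cast_nonneg T
    nlinarith [sq_nonneg qR, sq_nonneg (1 - qR), mul_nonneg hTnn hq0.le,
      mul_nonneg (mul_nonneg hTnn hq0.le) hq0.le]
  -- Chebyshev bound for the bad events
  set bad : ℕ → Set Ω := fun n => {ω | N (2^n) ω ≤ qR * ((2^n : ℕ):ℝ) / 2} with hbad_def
  have hcheb : ∀ n : ℕ, P (bad n) ≤ ENNReal.ofReal ((4 / qR^2) * (1/2:ℝ)^n) := by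
    intro n
    set T : ℕ := 2^n with hT_def
    have hpow : ((T : ℕ):ℝ) = (2:ℝ)^n := by rw [hT_def]; push_cast; ring
    have hT1 : (1:ℝ) ≤ (T:ℝ) := by
      rw [hpow]; exact one_le_pow₀ (by norm_num)
    have hTpos : (0:ℝ) < T := by linarith
    set ε : ℝ := (qR * T / 2)^2 with hε_def
    have hε0 : 0 < ε := by rw [hε_def]; positivity
    have hsub : bad n ⊆ {ω | ε ≤ (N T ω - qR*T)^2} := by
      intro ω hω
      rw [hbad_def] at hω
      simp only [Set.mem_setOf_eq] at hω ⊢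
      rw [hε_def]
      rw [← hT_def] at hω
      have h1 : qR * T / 2 ≤ qR * T - N T ω := by linarith
      have h0 : 0 ≤ qR * (T:ℝ) / 2 := by positivity
      nlinarith
    have hmarkov := MeasureTheory.mul_meas_ge_le_integral_of_nonneg
      (ae_of_all P (fun ω => sq_nonneg (N T ω - qR*T))) (hSqInt T) ε
    have h3 : (P {ω | ε ≤ (N T ω - qR*T)^2}).toReal ≤ (T:ℝ) / ε := by
      rw [le_div_iff₀ hε0]
      calc (P {ω | ε ≤ (N T ω - qR*T)^2}).toReal * ε
          = ε * (P {ω | ε ≤ (N T ω - qR*T)^2}).toReal := by ring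
      _ ≤ ∫ ω, (N T ω - qR*T)^2 ∂P := hmarkov
      _ ≤ T := hVar T
    have h4 : (P (bad n)).toReal ≤ (T:ℝ) / ε := by
      refine le_trans ?_ h3
      apply ENNReal.toReal_mono (measure_ne_top P _)
      exact measure_mono hsub
    have h5 : (T:ℝ) / ε = (4 / qR^2) * (1/2:ℝ)^n := by
      rw [hε_def, hpow, one_div, inv_pow]
      field_simp
      ring
    rw [← ENNReal.ofReal_toReal (measure_ne_top P (bad n))]
    exact ENNReal.ofReal_le_ofReal (le_trans h4 (le_of_eq h5))
  have hsum : (∑' n, P (bad n)) ≠ ⊤ := by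
    have hsummf : Summable (fun n : ℕ => (4 / qR^2) * (1/2:ℝ)^n) :=
      (summable_geometric_of_lt_one (by norm_num) (by norm_num)).mul_left _
    have h1 : (∑' n, P (bad n)) ≤ ∑' n, ENNReal.ofReal ((4 / qR^2) * (1/2:ℝ)^n) :=
      ENNReal.tsum_le_tsum hcheb
    have h2 : ∑' n, ENNReal.ofReal ((4 / qR^2) * (1/2:ℝ)^n)
        = ENNReal.ofReal (∑' n, (4 / qR^2) * (1/2:ℝ)^n) := by
      rw [ENNReal.ofReal_tsum_of_nonneg (fun n => by positivity) hsummf]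
    rw [h2] at h1
    exact ne_top_of_le_ne_top ENNReal.ofReal_ne_top h1
  filter_upwards [MeasureTheory.ae_eventually_notMem hsum] with ω hω
  rw [Filter.eventually_atTop] at hω
  obtain ⟨n₀, hn₀⟩ := hω
  refine ⟨qR/4, by positivity, 2^n₀, fun T hT => ?_⟩
  have hNeq : ∑ t ∈ range T, (if (∀ i j : Fin k, i ≠ j → ζ t i j ω = 1) then (1:ℝ) else 0)
      = N T ω := by
    rw [hN_def]
    exact Finset.sum_congr rfl fun t _ => (hY01 t ω).symm
  rw [hNeq]
  set n : ℕ := Nat.log 2 T with hn_def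
  have hT1 : 1 ≤ T := le_trans (Nat.one_le_two_pow) hT
  have hnn₀ : n₀ ≤ n := by
    rw [hn_def, ← Nat.log_pow (by norm_num : 1 < 2) n₀]
    exact Nat.log_mono_right hT
  have h2nT : 2^n ≤ T := Nat.pow_log_le_self 2 (by omega)
  have hT2n : T < 2^(n+1) := Nat.lt_pow_succ_log_self (by norm_num) T
  have hmono : N (2^n) ω ≤ N T ω := by
    rw [hN_def]
    exact Finset.sum_le_sum_of_subset_of_nonneg
      (Finset.range_subset_range.mpr h2nT) (fun t _ _ => hYnonneg t ω)
  have hbadn : ω ∉ bad n := hn₀ n hnn₀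
  rw [hbad_def] at hbadn
  simp only [Set.mem_setOf_eq, not_le] at hbadn
  have hcast : ((2^(n+1) : ℕ):ℝ) = 2 * ((2^n : ℕ):ℝ) := by push_cast; ring
  have hTlt : (T:ℝ) < 2 * ((2^n : ℕ):ℝ) := by
    rw [← hcast]; exact_mod_cast hT2n
  have : qR/4 * T ≤ qR * ((2^n : ℕ):ℝ) / 2 := by nlinarith
  linarith

/-- **Flocking for the Cucker–Smale model with random failures, sub-linear case.**
`k ≥ 2` agents with positions `X t ω i` and velocities `V t ω i` in `ℝ³` (at time
`t*h`) evolve by the Cucker–Smale dynamics with time step `0 < h ≤ 1/k` and weights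
`a_{ij}(t) = ζ^{ij}_t (1 + ‖X_i − X_j‖)^(−α)`, where the failure variables
`ζ^{ij}_t ∈ {0,1}` are symmetric in `(i,j)`, independent over unordered pairs of
distinct agents and time steps, and Bernoulli with `P(ζ = 1) = 1 − λ`,
`P(ζ = 0) = λ`, `λ ∈ (0,1)`. If `0 ≤ α < 1`, then almost surely all velocities
converge to the initial mean velocity and the positions relative to the center of
mass converge to a limiting configuration. -/
theorem stmt0 (k : ℕ) (hk : 2 ≤ k) (h : ℝ) (hh0 : 0 < h) (hhk : h ≤ 1 / k)
    (α : ℝ) (hα0 : 0 ≤ α) (hα1 : α < 1) (lam : ℝ) (hlam0 : 0 < lam) (hlam1 : lam < 1)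
    (Ω : Type*) [MeasurableSpace Ω] (P : Measure Ω) [IsProbabilityMeasure P]
    (ζ : ℕ → Fin k → Fin k → Ω → ℝ)
    (hζmeas : ∀ t i j, Measurable (ζ t i j))
    (hζsymm : ∀ t i j, ζ t i j = ζ t j i)
    (hζval : ∀ t i j ω, ζ t i j ω = 0 ∨ ζ t i j ω = 1)
    (hζform : ∀ t i j, i ≠ j → P {ω | ζ t i j ω = 1} = ENNReal.ofReal (1 - lam))
    (hζfail : ∀ t i j, i ≠ j → P {ω | ζ t i j ω = 0} = ENNReal.ofReal lam)
    (hζindep : iIndepFun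
      (fun q : ℕ × {p : Fin k × Fin k // p.1 < p.2} => ζ q.1 q.2.1.1 q.2.1.2) P)
    (X V : ℕ → Ω → Fin k → EuclideanSpace ℝ (Fin 3))
    (X0 V0 : Fin k → EuclideanSpace ℝ (Fin 3))
    (hX0 : ∀ ω, X 0 ω = X0) (hV0 : ∀ ω, V 0 ω = V0)
    (hdynX : ∀ t ω i, X (t + 1) ω i = X t ω i + h • V t ω i)
    (hdynV : ∀ t ω i, V (t + 1) ω i = V t ω i +
      h • ∑ j, (ζ t i j ω * (1 + ‖X t ω i - X t ω j‖) ^ (-α)) •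
        (V t ω j - V t ω i)) :
    ∀ᵐ ω ∂P,
      (∀ i, Tendsto (fun t => V t ω i) atTop (nhds ((k : ℝ)⁻¹ • ∑ j, V0 j))) ∧
      ∃ xhat : Fin k → EuclideanSpace ℝ (Fin 3),
        ∀ i, Tendsto (fun t => X t ω i - (k : ℝ)⁻¹ • ∑ j, X t ω j)
          atTop (nhds (xhat i)) := by
  have hmain := prob_good hk lam hlam0 hlam1 P ζ hζmeas hζsymm hζform hζindep
  filter_upwards [hmain] with ω hω
  obtain ⟨γ, hγ0, T₀, hgood⟩ := hω
  have hdet := det_flocking hk h α hh0 hhk hα0 hα1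
    (fun t i j => ζ t i j ω)
    (fun t i j => congrFun (hζsymm t i j) ω)
    (fun t i j => hζval t i j ω)
    (fun t => X t ω) (fun t => V t ω)
    (fun t i => hdynX t ω i) (fun t i => hdynV t ω i)
    γ hγ0 T₀ hgood
  simp only [hV0 ω] at hdet
  exact hdet
end

section
/- Let 0 ≤ α < 1, h > 0, A > 0, B > 0, and let (ζ_i)_{i ≥ 0} be independent random variables taking values in [0, M] with common mean E[ζ_i] = m > 0, where hMA/(B+1) ≤ 1. Define the random partial sums S[τ] = Σ_{j=1}^{τ−1} ∏_{i=0}^{j−1} (1 − h ζ_i A/(B + i^α)). Then sup_τ E[S[τ]] < ∞, and the increasing sequence S[τ] converges almost surely to a finite limit S = Σ_{j=1}^∞ ∏_{i=0}^{j−1} (1 − h ζ_i A/(B + i^α)) < ∞. -/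
open scoped BigOperators
open MeasureTheory ProbabilityTheory Filter

lemma aux_exp_neg_le (c : ℝ) (hc : 0 < c) (k : ℕ) (x : ℝ) (hx : c ≤ x) :
    Real.exp (-x) ≤ (Nat.factorial k : ℝ) / x ^ k := by
  have hx0 : 0 < x := hc.trans_le hx
  have h1 : x ^ k / (Nat.factorial k : ℝ) ≤ Real.exp x :=
    Real.pow_div_factorial_le_exp (hx := hx0.le) (n := k)
  have h2 : 0 < x ^ k / (Nat.factorial k : ℝ) := by positivity
  rw [Real.exp_neg]
  calc (Real.exp x)⁻¹ ≤ (x ^ k / (Nat.factorial k : ℝ))⁻¹ := inv_anti₀ h2 h1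
    _ = (Nat.factorial k : ℝ) / x ^ k := by rw [inv_div]

lemma aux_summable_exp (α : ℝ) (hα0 : 0 ≤ α) (hα1 : α < 1) (c B : ℝ) (hc : 0 < c) (hB : 0 < B) :
    Summable (fun j : ℕ => Real.exp (-((↑(j - 1) : ℝ) * (c / (B + (j : ℝ) ^ α))))) := by
  set δ : ℝ := 1 - α with hδ
  have hδ0 : 0 < δ := by simp only [hδ]; linarith
  set c' : ℝ := c / (4 * (B + 1)) with hc'
  have hc'0 : 0 < c' := by positivity
  set k : ℕ := ⌈2 / δ⌉₊ with hk
  have hkδ : 2 ≤ δ * (k : ℝ) := by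
    rw [mul_comm, ← div_le_iff₀ hδ0]
    exact Nat.le_ceil _
  set K : ℝ := (Nat.factorial k : ℝ) / c' ^ k with hK
  have hK0 : 0 ≤ K := by positivity
  have key : ∀ j : ℕ, 2 ≤ j →
      Real.exp (-((↑(j - 1) : ℝ) * (c / (B + (j : ℝ) ^ α)))) ≤ K * ((j : ℝ) ^ (2:ℝ))⁻¹ := by
    intro j hj
    have hj1 : (1 : ℝ) ≤ (j : ℝ) := by exact_mod_cast Nat.one_le_of_lt hj
    have hj0 : (0 : ℝ) < (j : ℝ) := by linarith
    have hjα1 : (1 : ℝ) ≤ (j : ℝ) ^ α := Real.one_le_rpow hj1 hα0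
    have hjδ1 : (1 : ℝ) ≤ (j : ℝ) ^ δ := Real.one_le_rpow hj1 hδ0.le
    have hcast : (↑(j - 1) : ℝ) = (j : ℝ) - 1 := by
      have h1j : 1 ≤ j := by omega
      push_cast [h1j]; ring
    have h2j : (j : ℝ) / 2 ≤ (↑(j - 1) : ℝ) := by
      rw [hcast]
      have : (2 : ℝ) ≤ (j : ℝ) := by exact_mod_cast hj
      linarith
    have hden : B + (j : ℝ) ^ α ≤ 2 * (B + 1) * (j : ℝ) ^ α := by
      nlinarith [Real.rpow_nonneg hj0.le α]
    have hx : c' * (j : ℝ) ^ δ ≤ (↑(j - 1) : ℝ) * (c / (B + (j : ℝ) ^ α)) := by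
      have hrw : c' * (j : ℝ) ^ δ = ((j:ℝ)/2) * (c / (2 * (B+1) * (j:ℝ)^α)) := by
        rw [hδ, Real.rpow_sub hj0, Real.rpow_one, hc']
        field_simp
        ring
      rw [hrw]
      gcongr
    have hstep1 : Real.exp (-((↑(j - 1) : ℝ) * (c / (B + (j : ℝ) ^ α))))
        ≤ Real.exp (-(c' * (j : ℝ) ^ δ)) := by
      apply Real.exp_le_exp.mpr; linarith
    have hstep2 : Real.exp (-(c' * (j : ℝ) ^ δ)) ≤ (Nat.factorial k : ℝ) / (c' * (j:ℝ)^δ) ^ k := by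
      apply aux_exp_neg_le c' hc'0
      nlinarith
    have hstep3 : (Nat.factorial k : ℝ) / (c' * (j:ℝ)^δ) ^ k ≤ K * ((j : ℝ) ^ (2:ℝ))⁻¹ := by
      have hpow : (c' * (j:ℝ)^δ) ^ k = c' ^ k * (j:ℝ) ^ (δ * (k:ℝ)) := by
        rw [mul_pow, Real.rpow_mul hj0.le, Real.rpow_natCast]
      rw [hpow]
      have h2k : (j:ℝ) ^ (2:ℝ) ≤ (j:ℝ) ^ (δ * (k:ℝ)) :=
        Real.rpow_le_rpow_of_exponent_le hj1 hkδ
      have hmono : (Nat.factorial k : ℝ) / (c' ^ k * (j:ℝ) ^ (δ * (k:ℝ)))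
          ≤ (Nat.factorial k : ℝ) / (c' ^ k * (j:ℝ) ^ (2:ℝ)) := by
        gcongr
      refine hmono.trans_eq ?_
      rw [hK]; ring
    exact hstep1.trans (hstep2.trans hstep3)
  apply (summable_nat_add_iff 2).mp
  apply Summable.of_nonneg_of_le (fun n => (Real.exp_pos _).le)
    (fun n => key (n + 2) (by omega))
  have hbase : Summable (fun n : ℕ => K * ((n:ℝ) ^ (2:ℝ))⁻¹) := by
    apply Summable.mul_left
    simpa [one_div] using Real.summable_one_div_nat_rpow.mpr (by norm_num : (1:ℝ) < 2)
  exact (summable_nat_add_iff 2).mpr hbase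

set_option maxHeartbeats 1000000 in
/-- Sub-linear case: for independent random variables `ζ_i ∈ [0, M]` with common
mean `m > 0`, the random series `S[τ] = Σ_{j=1}^{τ−1} Π_{i=0}^{j−1} (1 − hζ_i A/(B+i^α))`
has uniformly bounded expectations and converges almost surely to a finite limit. -/
theorem stmt10 (α : ℝ) (hα0 : 0 ≤ α) (hα1 : α < 1)
    (h A B M m : ℝ) (hh : 0 < h) (hA : 0 < A) (hB : 0 < B) (hm : 0 < m)
    (hMA : h * M * A / (B + 1) ≤ 1)
    (Ω : Type*) [MeasurableSpace Ω] (P : Measure Ω) [IsProbabilityMeasure P]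
    (ζ : ℕ → Ω → ℝ) (hmeas : ∀ i, Measurable (ζ i))
    (hrange : ∀ i ω, ζ i ω ∈ Set.Icc (0 : ℝ) M)
    (hmean : ∀ i, ∫ ω, ζ i ω ∂P = m)
    (hindep : iIndepFun ζ P) :
    BddAbove (Set.range fun τ : ℕ =>
      ∫ ω, (∑ j ∈ Finset.Ico 1 τ,
        ∏ i ∈ Finset.range j, (1 - h * ζ i ω * A / (B + (i : ℝ) ^ α))) ∂P) ∧
    ∀ᵐ ω ∂P,
      (Summable fun j : ℕ =>
        ∏ i ∈ Finset.range (j + 1), (1 - h * ζ i ω * A / (B + (i : ℝ) ^ α))) ∧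
      Tendsto (fun τ : ℕ => ∑ j ∈ Finset.Ico 1 τ,
          ∏ i ∈ Finset.range j, (1 - h * ζ i ω * A / (B + (i : ℝ) ^ α)))
        atTop
        (nhds (∑' j : ℕ,
          ∏ i ∈ Finset.range (j + 1), (1 - h * ζ i ω * A / (B + (i : ℝ) ^ α)))) := by
  classical
  set F : ℕ → Ω → ℝ := fun i ω => 1 - h * ζ i ω * A / (B + (i:ℝ)^α) with hFdef
  clear_value F
  have hDpos : ∀ i : ℕ, (0:ℝ) < B + (i:ℝ)^α := by
    intro i
    have := Real.rpow_nonneg (Nat.cast_nonneg i) α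
    linarith
  have hMA' : h * M * A ≤ B + 1 := by
    rwa [div_le_one (by linarith)] at hMA
  have hΩ : Nonempty Ω := by
    by_contra hne
    rw [not_nonempty_iff] at hne
    have h1 : P Set.univ = 1 := measure_univ
    rw [Set.univ_eq_empty_iff.mpr hne] at h1
    simp at h1
  have hM0 : 0 ≤ M := le_trans (hrange 0 hΩ.some).1 (hrange 0 hΩ.some).2
  have hζint : ∀ i, Integrable (ζ i) P := by
    intro i
    refine (integrable_const M).mono' (hmeas i).aestronglyMeasurable ?_
    refine ae_of_all _ fun ω => ?_
    rw [Real.norm_eq_abs, abs_le]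
    exact ⟨by linarith [(hrange i ω).1], (hrange i ω).2⟩
  have hmM : m ≤ M := by
    have h1 := integral_mono (hζint 0) (integrable_const M) (fun ω => (hrange 0 ω).2)
    rwa [hmean 0, integral_const, probReal_univ, smul_eq_mul, one_mul] at h1
  have hFmeas : ∀ i, Measurable (F i) := by
    intro i
    rw [hFdef]
    apply Measurable.const_sub
    exact ((measurable_const.mul (hmeas i)).mul_const A).div_const _
  have hFle1 : ∀ i ω, F i ω ≤ 1 := by
    intro i ω
    have h1 : 0 ≤ h * ζ i ω * A / (B + (i:ℝ)^α) := by
      have h2 := (hrange i ω).1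
      have := hDpos i
      positivity
    simp only [hFdef]; linarith
  have hCabs : ∀ i ω, |F i ω| ≤ 1 + h * M * A / B := by
    intro i ω
    have hnn : 0 ≤ h * M * A / B := by positivity
    rw [abs_le]
    constructor
    · have hd : B ≤ B + (i:ℝ)^α := by
        have := Real.rpow_nonneg (Nat.cast_nonneg i) α
        linarith
      have hnum : h * ζ i ω * A ≤ h * M * A :=
        mul_le_mul_of_nonneg_right (mul_le_mul_of_nonneg_left (hrange i ω).2 hh.le) hA.le
      have h2 : h * ζ i ω * A / (B + (i:ℝ)^α) ≤ h * M * A / B :=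
        div_le_div₀ (by positivity) hnum hB hd
      simp only [hFdef]; linarith
    · linarith [hFle1 i ω]
  have hFnn : ∀ i, 1 ≤ i → ∀ ω, 0 ≤ F i ω := by
    intro i hi ω
    have hiα : (1:ℝ) ≤ (i:ℝ)^α := Real.one_le_rpow (by exact_mod_cast hi) hα0
    have hz0 := (hrange i ω).1
    have hzM := (hrange i ω).2
    have h1 : h * ζ i ω * A / (B + (i:ℝ)^α) ≤ 1 := by
      rw [div_le_one (hDpos i)]
      calc h * ζ i ω * A ≤ h * M * A :=
          mul_le_mul_of_nonneg_right (mul_le_mul_of_nonneg_left hzM hh.le) hA.le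
        _ ≤ B + 1 := hMA'
        _ ≤ B + (i:ℝ)^α := by linarith
    simp only [hFdef]; linarith
  have hPint : ∀ s : Finset ℕ, Integrable (fun ω => ∏ i ∈ s, F i ω) P := by
    intro s
    refine (integrable_const ((1 + h * M * A / B) ^ s.card)).mono'
      (Finset.measurable_prod s fun i _ => hFmeas i).aestronglyMeasurable ?_
    refine ae_of_all _ fun ω => ?_
    rw [Real.norm_eq_abs, Finset.abs_prod]
    calc ∏ i ∈ s, |F i ω| ≤ ∏ i ∈ s, (1 + h * M * A / B) :=
        Finset.prod_le_prod (fun i _ => abs_nonneg _) (fun i _ => hCabs i ω)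
      _ = (1 + h * M * A / B) ^ s.card := Finset.prod_const _
  have hEF : ∀ i : ℕ, ∫ ω, F i ω ∂P = 1 - h * m * A / (B + (i:ℝ)^α) := by
    intro i
    have hre : (fun ω => F i ω) = fun ω => 1 - (h * A / (B + (i:ℝ)^α)) * ζ i ω := by
      funext ω; simp only [hFdef]; ring
    rw [hre, integral_sub (integrable_const 1) ((hζint i).const_mul _),
      integral_const, integral_const_mul, hmean i, probReal_univ]
    simp
    ring
  have hFindep : iIndepFun F P := by
    have hcmeas : ∀ i : ℕ, Measurable (fun x : ℝ => 1 - h * x * A / (B + (i:ℝ)^α)) := by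
      intro i
      exact ((measurable_const.mul measurable_id).mul_const A).div_const _ |>.const_sub 1
    rw [hFdef]
    exact hindep.comp (fun i => fun x : ℝ => 1 - h * x * A / (B + (i:ℝ)^α)) hcmeas
  have hEprod : ∀ s : Finset ℕ,
      ∫ ω, ∏ i ∈ s, F i ω ∂P = ∏ i ∈ s, (1 - h * m * A / (B + (i:ℝ)^α)) := by
    intro s
    induction s using Finset.induction_on with
    | empty => simp
    | @insert a s ha ih =>
      have hfuneq : (∏ j ∈ s, F j) = fun ω => ∏ i ∈ s, F i ω := by
        funext ω; simp
      have hindep2 : IndepFun (F a) (fun ω => ∏ i ∈ s, F i ω) P := by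
        have h1 := (hFindep.indepFun_finsetProd_of_notMem hFmeas ha).symm
        rwa [hfuneq] at h1
      have h2 := hindep2.integral_fun_mul_eq_mul_integral (hPint {a} |>.congr ?_).aestronglyMeasurable (hPint s).aestronglyMeasurable
      rotate_left
      · refine ae_of_all _ fun ω => ?_
        simp
      calc ∫ ω, ∏ i ∈ insert a s, F i ω ∂P
          = ∫ ω, F a ω * ∏ i ∈ s, F i ω ∂P := by
            congr 1; funext ω; rw [Finset.prod_insert ha]
        _ = (∫ ω, F a ω ∂P) * ∫ ω, ∏ i ∈ s, F i ω ∂P := h2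
        _ = ∏ i ∈ insert a s, (1 - h * m * A / (B + (i:ℝ)^α)) := by
            rw [hEF a, ih, Finset.prod_insert ha]
  -- deterministic sequence
  have hμnn : ∀ i : ℕ, 1 ≤ i → 0 ≤ 1 - h * m * A / (B + (i:ℝ)^α) := by
    intro i hi
    have hiα : (1:ℝ) ≤ (i:ℝ)^α := Real.one_le_rpow (by exact_mod_cast hi) hα0
    have h1 : h * m * A / (B + (i:ℝ)^α) ≤ 1 := by
      rw [div_le_one (hDpos i)]
      calc h * m * A ≤ h * M * A :=
          mul_le_mul_of_nonneg_right (mul_le_mul_of_nonneg_left hmM hh.le) hA.le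
        _ ≤ B + 1 := hMA'
        _ ≤ B + (i:ℝ)^α := by linarith
    linarith
  have hPdnn : ∀ j : ℕ, 0 ≤ ∏ i ∈ Finset.Ico 1 j, (1 - h * m * A / (B + (i:ℝ)^α)) := by
    intro j
    exact Finset.prod_nonneg fun i hi => hμnn i (Finset.mem_Ico.mp hi).1
  have hPdle : ∀ j : ℕ, ∏ i ∈ Finset.Ico 1 j, (1 - h * m * A / (B + (i:ℝ)^α))
      ≤ Real.exp (-((↑(j - 1) : ℝ) * (h * m * A / (B + (j:ℝ)^α)))) := by
    intro j
    have hμle : ∀ i : ℕ, 1 - h * m * A / (B + (i:ℝ)^α)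
        ≤ Real.exp (-(h * m * A / (B + (i:ℝ)^α))) := by
      intro i
      have := Real.add_one_le_exp (-(h * m * A / (B + (i:ℝ)^α)))
      linarith
    calc ∏ i ∈ Finset.Ico 1 j, (1 - h * m * A / (B + (i:ℝ)^α))
        ≤ ∏ i ∈ Finset.Ico 1 j, Real.exp (-(h * m * A / (B + (i:ℝ)^α))) :=
          Finset.prod_le_prod (fun i hi => hμnn i (Finset.mem_Ico.mp hi).1)
            (fun i _ => hμle i)
      _ = Real.exp (∑ i ∈ Finset.Ico 1 j, -(h * m * A / (B + (i:ℝ)^α))) :=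
          (Real.exp_sum _ _).symm
      _ ≤ Real.exp (-((↑(j - 1) : ℝ) * (h * m * A / (B + (j:ℝ)^α)))) := by
          apply Real.exp_le_exp.mpr
          rw [Finset.sum_neg_distrib, neg_le_neg_iff]
          have hterm : ∀ i ∈ Finset.Ico 1 j,
              h * m * A / (B + (j:ℝ)^α) ≤ h * m * A / (B + (i:ℝ)^α) := by
            intro i hi
            obtain ⟨hi1, hij⟩ := Finset.mem_Ico.mp hi
            have hij' : (i:ℝ) ≤ (j:ℝ) := by exact_mod_cast hij.le
            have hmono : (i:ℝ)^α ≤ (j:ℝ)^α :=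
              Real.rpow_le_rpow (Nat.cast_nonneg i) hij' hα0
            gcongr
            all_goals
              have := Real.rpow_nonneg (Nat.cast_nonneg i) α
              linarith
          have hcard := Finset.card_nsmul_le_sum (Finset.Ico 1 j)
            (fun i => h * m * A / (B + (i:ℝ)^α)) (h * m * A / (B + (j:ℝ)^α)) hterm
          rw [Nat.card_Ico, nsmul_eq_mul] at hcard
          exact hcard
  have hPdsum : Summable (fun j : ℕ => ∏ i ∈ Finset.Ico 1 j, (1 - h * m * A / (B + (i:ℝ)^α))) :=
    Summable.of_nonneg_of_le hPdnn hPdle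
      (aux_summable_exp α hα0 hα1 (h * m * A) B (by positivity) hB)
  -- Part 1: bounded expectations
  have hbdd : BddAbove (Set.range fun τ : ℕ =>
      ∫ ω, (∑ j ∈ Finset.Ico 1 τ, ∏ i ∈ Finset.range j, F i ω) ∂P) := by
    have hC0 : (0:ℝ) ≤ 1 + h * M * A / B := by positivity
    refine ⟨(1 + h * M * A / B) * ∑' j : ℕ, ∏ i ∈ Finset.Ico 1 j, (1 - h * m * A / (B + (i:ℝ)^α)), ?_⟩
    rintro x ⟨τ, rfl⟩
    dsimp only
    rw [integral_finset_sum _ (fun j _ => hPint (Finset.range j))]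
    have hterm : ∀ j ∈ Finset.Ico 1 τ, ∫ ω, ∏ i ∈ Finset.range j, F i ω ∂P
        ≤ (1 + h * M * A / B) * ∏ i ∈ Finset.Ico 1 j, (1 - h * m * A / (B + (i:ℝ)^α)) := by
      intro j hj
      obtain ⟨hj1, _⟩ := Finset.mem_Ico.mp hj
      rw [hEprod, Finset.range_eq_Ico, Finset.prod_eq_prod_Ico_succ_bot hj1]
      have hμ0 : (1 - h * m * A / (B + ((0:ℕ):ℝ)^α)) ≤ 1 + h * M * A / B := by
        have h01 : 0 ≤ h * m * A / (B + ((0:ℕ):ℝ)^α) := by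
          have := hDpos 0
          positivity
        have h02 : 0 ≤ h * M * A / B := by positivity
        linarith
      exact mul_le_mul_of_nonneg_right hμ0 (hPdnn j)
    calc ∑ j ∈ Finset.Ico 1 τ, ∫ ω, ∏ i ∈ Finset.range j, F i ω ∂P
        ≤ ∑ j ∈ Finset.Ico 1 τ, (1 + h * M * A / B) * ∏ i ∈ Finset.Ico 1 j, (1 - h * m * A / (B + (i:ℝ)^α)) :=
          Finset.sum_le_sum hterm
      _ = (1 + h * M * A / B) * ∑ j ∈ Finset.Ico 1 τ, ∏ i ∈ Finset.Ico 1 j, (1 - h * m * A / (B + (i:ℝ)^α)) :=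
          (Finset.mul_sum _ _ _).symm
      _ ≤ (1 + h * M * A / B) * ∑' j : ℕ, ∏ i ∈ Finset.Ico 1 j, (1 - h * m * A / (B + (i:ℝ)^α)) := by
          apply mul_le_mul_of_nonneg_left _ hC0
          exact Summable.sum_le_tsum _ (fun j _ => hPdnn j) hPdsum
  -- Part 2: a.e. summability of the tails
  have hgmeas : ∀ j : ℕ, Measurable fun ω => ∏ i ∈ Finset.Ico 1 j, F i ω :=
    fun j => Finset.measurable_prod _ fun i _ => hFmeas i
  have hgnn : ∀ (j : ℕ) ω, 0 ≤ ∏ i ∈ Finset.Ico 1 j, F i ω :=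
    fun j ω => Finset.prod_nonneg fun i hi => hFnn i (Finset.mem_Ico.mp hi).1 ω
  have haes : ∀ᵐ ω ∂P, Summable fun j : ℕ => ∏ i ∈ Finset.Ico 1 (j + 1), F i ω := by
    have h1 : ∀ j : ℕ, ∫⁻ ω, ENNReal.ofReal (∏ i ∈ Finset.Ico 1 (j+1), F i ω) ∂P
        = ENNReal.ofReal (∏ i ∈ Finset.Ico 1 (j+1), (1 - h * m * A / (B + (i:ℝ)^α))) := by
      intro j
      have := ofReal_integral_eq_lintegral_ofReal (hPint (Finset.Ico 1 (j+1)))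
        (ae_of_all _ (hgnn (j+1)))
      rw [hEprod] at this
      exact this.symm
    have h2 : ∫⁻ ω, ∑' j : ℕ, ENNReal.ofReal (∏ i ∈ Finset.Ico 1 (j+1), F i ω) ∂P ≠ ⊤ := by
      have hshift : Summable (fun j : ℕ =>
          ∏ i ∈ Finset.Ico 1 (j+1), (1 - h * m * A / (B + (i:ℝ)^α))) :=
        (summable_nat_add_iff
          (f := fun j : ℕ => ∏ i ∈ Finset.Ico 1 j, (1 - h * m * A / (B + (i:ℝ)^α))) 1).mpr hPdsum
      rw [lintegral_tsum (fun j => ((hgmeas (j+1)).ennreal_ofReal).aemeasurable),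
        tsum_congr h1, ← ENNReal.ofReal_tsum_of_nonneg (fun j => hPdnn (j+1)) hshift]
      exact ENNReal.ofReal_ne_top
    have h3 := ae_lt_top' (Measurable.aemeasurable
      (Measurable.ennreal_tsum fun j => (hgmeas (j+1)).ennreal_ofReal)) h2
    filter_upwards [h3] with ω hω
    have h4 := ENNReal.summable_toReal hω.ne
    refine h4.congr fun j => ?_
    exact ENNReal.toReal_ofReal (hgnn (j+1) ω)
  refine ⟨?_, ?_⟩
  · simpa only [hFdef] using hbdd
  · filter_upwards [haes] with ω hω
    have hb : Summable fun j : ℕ => ∏ i ∈ Finset.range (j + 1), F i ω := by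
      refine (hω.mul_left (F 0 ω)).congr fun j => ?_
      rw [Finset.range_eq_Ico, Finset.prod_eq_prod_Ico_succ_bot (Nat.succ_pos j)]
    constructor
    · simpa only [hFdef] using hb
    · have ht := (hb.hasSum.tendsto_sum_nat).comp (tendsto_sub_atTop_nat 1)
      have heq : ∀ τ : ℕ, ∑ i ∈ Finset.range (τ - 1), ∏ i' ∈ Finset.range (i + 1), F i' ω
          = ∑ j ∈ Finset.Ico 1 τ, ∏ i ∈ Finset.range j, F i ω := by
        intro τ
        rw [Finset.sum_Ico_eq_sum_range]
        exact Finset.sum_congr rfl fun i _ => by rw [Nat.add_comm 1 i]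
      have ht2 : Tendsto (fun τ : ℕ => ∑ j ∈ Finset.Ico 1 τ, ∏ i ∈ Finset.range j, F i ω)
          atTop (nhds (∑' j : ℕ, ∏ i ∈ Finset.range (j + 1), F i ω)) := by
        refine Tendsto.congr (fun τ => heq τ) ht
      simpa only [hFdef] using ht2
end

section
/- Let h > 0, A > 0, B > 0, and let (ζ_i)_{i ≥ 0} be independent random variables taking values in [0, M] with common mean E[ζ_i] = m > 0, where hMA/(B+1) ≤ 1 and hAm > 1. Define S[τ] = Σ_{j=1}^{τ−1} ∏_{i=0}^{j−1} (1 − h ζ_i A/(B + i)). Then sup_τ E[S[τ]] < ∞, and the increasing sequence S[τ] converges almost surely to a finite limit S = Σ_{j=1}^∞ ∏_{i=0}^{j−1} (1 − h ζ_i A/(B + i)) < ∞. -/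
open scoped BigOperators
open MeasureTheory ProbabilityTheory Filter

/-- Linear case: for independent random variables `ζ_i ∈ [0, M]` with common
mean `m > 0`, the random series `S[τ] = Σ_{j=1}^{τ−1} Π_{i=0}^{j−1} (1 − hζ_i A/(B+i))`
has uniformly bounded expectations and converges almost surely to a finite limit. -/
theorem stmt11 (h A B M m : ℝ) (hh : 0 < h) (hA : 0 < A) (hB : 0 < B) (hm : 0 < m)
    (hMA : h * M * A / (B + 1) ≤ 1) (hAm : 1 < h * A * m)
    (Ω : Type*) [MeasurableSpace Ω] (P : Measure Ω) [IsProbabilityMeasure P]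
    (ζ : ℕ → Ω → ℝ) (hmeas : ∀ i, Measurable (ζ i))
    (hrange : ∀ i ω, ζ i ω ∈ Set.Icc (0 : ℝ) M)
    (hmean : ∀ i, ∫ ω, ζ i ω ∂P = m)
    (hindep : iIndepFun ζ P) :
    BddAbove (Set.range fun τ : ℕ =>
      ∫ ω, (∑ j ∈ Finset.Ico 1 τ,
        ∏ i ∈ Finset.range j, (1 - h * ζ i ω * A / (B + (i : ℝ)))) ∂P) ∧
    ∀ᵐ ω ∂P,
      (Summable fun j : ℕ =>
        ∏ i ∈ Finset.range (j + 1), (1 - h * ζ i ω * A / (B + (i : ℝ)))) ∧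
      Tendsto (fun τ : ℕ => ∑ j ∈ Finset.Ico 1 τ,
          ∏ i ∈ Finset.range j, (1 - h * ζ i ω * A / (B + (i : ℝ))))
        atTop
        (nhds (∑' j : ℕ,
          ∏ i ∈ Finset.range (j + 1), (1 - h * ζ i ω * A / (B + (i : ℝ))))) := by
  classical
  set p : ℝ := h * A * m with hp_def
  have hp1 : (1:ℝ) < p := hAm
  have hp0 : (0:ℝ) < p := one_pos.trans hp1
  have hBi : ∀ i : ℕ, (0:ℝ) < B + i := fun i => by positivity
  have hMA' : h * M * A ≤ B + 1 := by
    rw [div_le_one (by positivity)] at hMA; exact hMA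
  -- integrability of ζ
  have hζint : ∀ i, Integrable (ζ i) P := by
    intro i
    refine (integrable_const M).mono' (hmeas i).aestronglyMeasurable
      (ae_of_all _ fun ω => ?_)
    have h1 := (hrange i ω).1; have h2 := (hrange i ω).2
    rw [Real.norm_eq_abs, abs_le]; constructor <;> linarith
  have hmM : m ≤ M := by
    have := integral_mono (hζint 0) (integrable_const M) (fun ω => (hrange 0 ω).2)
    simpa [hmean 0, integral_const] using this
  -- basic bounds on the factors
  have hζA : ∀ i ω, h * ζ i ω * A ≤ B + 1 := by
    intro i ω
    nlinarith [(hrange i ω).1, (hrange i ω).2, hh.le, hA.le,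
      mul_le_mul_of_nonneg_left (hrange i ω).2 (mul_nonneg hh.le hA.le)]
  have hfac_le_one : ∀ (i:ℕ) ω, (1 - h * ζ i ω * A / (B + (i:ℝ))) ≤ 1 := by
    intro i ω
    have : 0 ≤ h * ζ i ω * A / (B + (i:ℝ)) :=
      div_nonneg (mul_nonneg (mul_nonneg hh.le (hrange i ω).1) hA.le) (hBi i).le
    linarith
  have hfac_abs : ∀ (i:ℕ) ω, |1 - h * ζ i ω * A / (B + (i:ℝ))| ≤ 1 + 1/B := by
    intro i ω
    have hq : h * ζ i ω * A / (B + (i:ℝ)) ≤ (B+1)/B := by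
      rw [div_le_div_iff₀ (hBi i) hB]
      nlinarith [hζA i ω, (Nat.cast_nonneg i : (0:ℝ) ≤ i), hB,
        mul_nonneg (mul_nonneg hh.le (hrange i ω).1) hA.le]
    have h1B : (0:ℝ) < 1/B := by positivity
    rw [abs_le]
    constructor
    · have : (B+1)/B = 1 + 1/B := by field_simp
      linarith [hfac_le_one i ω, this ▸ hq]
    · linarith [hfac_le_one i ω]
  have hfac_nonneg : ∀ (i:ℕ), 1 ≤ i → ∀ ω, 0 ≤ 1 - h * ζ i ω * A / (B + (i:ℝ)) := by
    intro i hi ω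
    have hi' : (1:ℝ) ≤ (i:ℝ) := by exact_mod_cast hi
    have : h * ζ i ω * A / (B + (i:ℝ)) ≤ 1 := by
      rw [div_le_one (hBi i)]
      linarith [hζA i ω]
    linarith
  -- measurability and integrability of products
  have hfmeas : ∀ i : ℕ, Measurable (fun ω => 1 - h * ζ i ω * A / (B + (i:ℝ))) :=
    fun i => measurable_const.sub ((((hmeas i).const_mul h).mul_const A).div_const _)
  have hpmeas : ∀ s : Finset ℕ,
      Measurable (fun ω => ∏ i ∈ s, (1 - h * ζ i ω * A / (B + (i:ℝ)))) :=
    fun s => Finset.measurable_prod s fun i _ => hfmeas i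
  have hprodint : ∀ s : Finset ℕ,
      Integrable (fun ω => ∏ i ∈ s, (1 - h * ζ i ω * A / (B + (i:ℝ)))) P := by
    intro s
    refine (integrable_const ((1 + 1/B) ^ s.card)).mono'
      (hpmeas s).aestronglyMeasurable (ae_of_all _ fun ω => ?_)
    rw [Real.norm_eq_abs, Finset.abs_prod]
    calc ∏ i ∈ s, |1 - h * ζ i ω * A / (B + (i:ℝ))|
        ≤ ∏ i ∈ s, (1 + 1/B) :=
          Finset.prod_le_prod (fun i _ => abs_nonneg _) (fun i _ => hfac_abs i ω)
      _ = (1 + 1/B) ^ s.card := Finset.prod_const _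
  -- independence of the factors
  have hgind : iIndepFun
      (fun i ω => 1 - h * ζ i ω * A / (B + (i:ℝ))) P :=
    hindep.comp (fun i (x:ℝ) => 1 - h * x * A / (B + (i:ℝ)))
      (fun i => measurable_const.sub (((measurable_id.const_mul h).mul_const A).div_const _))
  -- expectation of a single factor
  have hint1 : ∀ i : ℕ, ∫ ω, (1 - h * ζ i ω * A / (B + (i:ℝ))) ∂P
      = 1 - h * m * A / (B + (i:ℝ)) := by
    intro i
    rw [integral_sub (integrable_const 1) ((((hζint i).const_mul h).mul_const A).div_const _)]
    have e1 : (fun ω => h * ζ i ω * A / (B + (i:ℝ)))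
        = fun ω => (h * A / (B + (i:ℝ))) * ζ i ω := by funext ω; ring
    rw [integral_const, probReal_univ, e1, integral_const_mul, hmean i]
    simp; ring
  -- expectation of products over arbitrary finsets
  have hEprod : ∀ s : Finset ℕ, ∫ ω, (∏ i ∈ s, (1 - h * ζ i ω * A / (B + (i:ℝ)))) ∂P
      = ∏ i ∈ s, (1 - h * m * A / (B + (i:ℝ))) := by
    intro s
    induction s using Finset.cons_induction with
    | empty => simp
    | cons a s ha ih =>
      simp only [Finset.prod_cons]
      have hIndep : IndepFun (fun ω => 1 - h * ζ a ω * A / (B + (a:ℝ)))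
          (fun ω => ∏ i ∈ s, (1 - h * ζ i ω * A / (B + (i:ℝ)))) P := by
        have := (hgind.indepFun_finsetProd_of_notMem (fun i => hfmeas i) ha).symm
        have he : (∏ j ∈ s, (fun i ω => 1 - h * ζ i ω * A / (B + (i:ℝ))) j)
            = fun ω => ∏ i ∈ s, (1 - h * ζ i ω * A / (B + (i:ℝ))) := by
          funext ω; simp [Finset.prod_apply]
        rwa [he] at this
      have := hIndep.integral_mul_eq_mul_integral (hprodint {a} |>.congr ?_).aestronglyMeasurable (hprodint s).aestronglyMeasurable
      · have he2 : ((fun ω => 1 - h * ζ a ω * A / (B + (a:ℝ))) *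
            fun ω => ∏ i ∈ s, (1 - h * ζ i ω * A / (B + (i:ℝ))))
            = fun ω => (1 - h * ζ a ω * A / (B + (a:ℝ))) *
              ∏ i ∈ s, (1 - h * ζ i ω * A / (B + (i:ℝ))) := rfl
        rw [he2] at this
        rw [this, hint1 a, ih]
      · exact ae_of_all _ fun ω => by simp
  -- the deterministic sequence and its summability
  set c : ℕ → ℝ := fun i => 1 - h * m * A / (B + (i:ℝ)) with hc_def
  have hcnonneg : ∀ i : ℕ, 1 ≤ i → 0 ≤ c i := by
    intro i hi
    have hi' : (1:ℝ) ≤ (i:ℝ) := by exact_mod_cast hi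
    have : h * m * A ≤ B + 1 := by nlinarith [mul_le_mul_of_nonneg_left hmM (mul_nonneg hh.le hA.le)]
    have : h * m * A / (B + (i:ℝ)) ≤ 1 := by rw [div_le_one (hBi i)]; linarith
    simp only [hc_def]; linarith
  have hcle : ∀ i : ℕ, c i ≤ Real.exp (-(p / (B + (i:ℝ)))) := by
    intro i
    have := Real.add_one_le_exp (-(p / (B + (i:ℝ))))
    simp only [hc_def, hp_def]
    have : 1 - h * A * m / (B + (i:ℝ)) ≤ Real.exp (-(h * A * m / (B + (i:ℝ)))) := by linarith
    calc 1 - h * m * A / (B + (i:ℝ)) = 1 - h * A * m / (B + (i:ℝ)) := by ring_nf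
      _ ≤ _ := this
  set a : ℕ → ℝ := fun j => ∏ i ∈ Finset.Ico 1 (j+1), c i with ha_def
  have hanonneg : ∀ j, 0 ≤ a j := fun j =>
    Finset.prod_nonneg fun i hi => hcnonneg i (Finset.mem_Ico.1 hi).1
  have halog : ∀ j : ℕ, a j ≤ ((B+1)/(B+(j:ℝ)+1)) ^ p := by
    intro j
    have h1 : a j ≤ Real.exp (-(∑ i ∈ Finset.Ico 1 (j+1), p / (B + (i:ℝ)))) := by
      calc a j ≤ ∏ i ∈ Finset.Ico 1 (j+1), Real.exp (-(p / (B + (i:ℝ)))) :=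
            Finset.prod_le_prod (fun i hi => hcnonneg i (Finset.mem_Ico.1 hi).1)
              (fun i _ => hcle i)
        _ = Real.exp (∑ i ∈ Finset.Ico 1 (j+1), -(p / (B + (i:ℝ)))) :=
            (Real.exp_sum _ _).symm
        _ = _ := by rw [Finset.sum_neg_distrib]
    have h2 : p * (Real.log (B + (j:ℝ) + 1) - Real.log (B + 1))
        ≤ ∑ i ∈ Finset.Ico 1 (j+1), p / (B + (i:ℝ)) := by
      have hlog : ∀ i : ℕ, Real.log (B + (i:ℝ) + 1) - Real.log (B + (i:ℝ)) ≤ 1 / (B + (i:ℝ)) := by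
        intro i
        have hpos : (0:ℝ) < B + (i:ℝ) := hBi i
        have hpos' : (0:ℝ) < (B + (i:ℝ) + 1) / (B + (i:ℝ)) := by positivity
        have := Real.log_le_sub_one_of_pos hpos'
        rw [Real.log_div (by linarith) (ne_of_gt hpos)] at this
        have : (B + (i:ℝ) + 1) / (B + (i:ℝ)) - 1 = 1 / (B + (i:ℝ)) := by field_simp; ring
        linarith [Real.log_le_sub_one_of_pos hpos', this ▸ (Real.log_le_sub_one_of_pos hpos')]
      have htel : ∑ i ∈ Finset.Ico 1 (j+1),
          (Real.log (B + (i:ℝ) + 1) - Real.log (B + (i:ℝ)))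
          = Real.log (B + (j:ℝ) + 1) - Real.log (B + 1) := by
        rw [Finset.sum_Ico_eq_sum_range]
        simp only [Nat.add_sub_cancel]
        have := Finset.sum_range_sub (fun k : ℕ => Real.log (B + 1 + (k:ℝ))) j
        simp only [Nat.cast_add, Nat.cast_one] at this ⊢
        calc ∑ i ∈ Finset.range j, (Real.log (B + (1 + (i:ℝ)) + 1) - Real.log (B + (1 + (i:ℝ))))
            = ∑ i ∈ Finset.range j, (Real.log (B + 1 + ((i:ℝ)+1)) - Real.log (B + 1 + (i:ℝ))) := by
              apply Finset.sum_congr rfl; intro i _; ring_nf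
          _ = Real.log (B + 1 + (j:ℝ)) - Real.log (B + 1 + (0:ℕ)) := by
              have := Finset.sum_range_sub (fun k : ℕ => Real.log (B + 1 + (k:ℝ))) j
              push_cast at this ⊢
              convert this using 2
          _ = Real.log (B + (j:ℝ) + 1) - Real.log (B + 1) := by norm_num; ring_nf
      calc p * (Real.log (B + (j:ℝ) + 1) - Real.log (B + 1))
          = ∑ i ∈ Finset.Ico 1 (j+1),
              p * (Real.log (B + (i:ℝ) + 1) - Real.log (B + (i:ℝ))) := by
            rw [← Finset.mul_sum, htel]
        _ ≤ ∑ i ∈ Finset.Ico 1 (j+1), p / (B + (i:ℝ)) := by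
            apply Finset.sum_le_sum
            intro i _
            rw [div_eq_mul_one_div p]
            exact mul_le_mul_of_nonneg_left (hlog i) hp0.le
    have h3 : Real.exp (-(∑ i ∈ Finset.Ico 1 (j+1), p / (B + (i:ℝ))))
        ≤ Real.exp (-(p * (Real.log (B + (j:ℝ) + 1) - Real.log (B + 1)))) :=
      Real.exp_le_exp.2 (by linarith)
    have h4 : Real.exp (-(p * (Real.log (B + (j:ℝ) + 1) - Real.log (B + 1))))
        = ((B+1)/(B+(j:ℝ)+1)) ^ p := by
      have hd : (0:ℝ) < (B+1)/(B+(j:ℝ)+1) := by positivity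
      rw [Real.rpow_def_of_pos hd, Real.log_div (by positivity) (by positivity)]
      ring_nf
    linarith [h1, h3, h4 ▸ h3]
  have hasum : Summable a := by
    have hs0 : Summable (fun j : ℕ => ((j:ℝ)^p)⁻¹) := Real.summable_nat_rpow_inv.2 hp1
    have hs1 : Summable (fun j : ℕ => (((j:ℝ)+1)^p)⁻¹) := by
      refine (hs0.comp_injective (add_left_injective 1)).congr fun n => ?_
      simp [Function.comp]
    have hs2 : Summable (fun j : ℕ => (B+1)^p * (((j:ℝ)+1)^p)⁻¹) := hs1.mul_left _
    refine Summable.of_nonneg_of_le hanonneg (fun j => ?_) hs2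
    calc a j ≤ ((B+1)/(B+(j:ℝ)+1)) ^ p := halog j
      _ ≤ ((B+1)/((j:ℝ)+1)) ^ p := by
          apply Real.rpow_le_rpow (by positivity) _ hp0.le
          apply div_le_div_of_nonneg_left (by positivity) (by positivity) (by linarith)
      _ = (B+1)^p * (((j:ℝ)+1)^p)⁻¹ := by
          rw [Real.div_rpow (by positivity) (by positivity)]; ring
  -- key decomposition: range j = insert 0 (Ico 1 j) for j ≥ 1
  have hsplit : ∀ (j : ℕ), 1 ≤ j → ∀ ω,
      ∏ i ∈ Finset.range j, (1 - h * ζ i ω * A / (B + (i:ℝ)))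
      = (1 - h * ζ 0 ω * A / (B + (0:ℝ))) *
        ∏ i ∈ Finset.Ico 1 j, (1 - h * ζ i ω * A / (B + (i:ℝ))) := by
    intro j hj ω
    rw [Finset.range_eq_Ico, Finset.prod_eq_prod_Ico_succ_bot hj]
    norm_num
  -- pointwise bound
  have hKpos : (0:ℝ) < 1 + 1/B := by positivity
  have hptbound : ∀ (j : ℕ), 1 ≤ j → ∀ ω,
      |∏ i ∈ Finset.range j, (1 - h * ζ i ω * A / (B + (i:ℝ)))|
      ≤ (1 + 1/B) * ∏ i ∈ Finset.Ico 1 j, (1 - h * ζ i ω * A / (B + (i:ℝ))) := by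
    intro j hj ω
    rw [hsplit j hj ω, abs_mul]
    have hnn : 0 ≤ ∏ i ∈ Finset.Ico 1 j, (1 - h * ζ i ω * A / (B + (i:ℝ))) :=
      Finset.prod_nonneg fun i hi => hfac_nonneg i (Finset.mem_Ico.1 hi).1 ω
    rw [abs_of_nonneg hnn]
    exact mul_le_mul_of_nonneg_right (by simpa using hfac_abs 0 ω) hnn
  -- expectation bound for each term
  have hEb : ∀ (j : ℕ), 1 ≤ j →
      ∫ ω, (∏ i ∈ Finset.range j, (1 - h * ζ i ω * A / (B + (i:ℝ)))) ∂P
      ≤ (1 + 1/B) * a (j - 1) := by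
    intro j hj
    have hIco : Finset.Ico 1 ((j-1)+1) = Finset.Ico 1 j := by
      congr 1; omega
    have e : a (j-1) = ∏ i ∈ Finset.Ico 1 j, c i := by rw [ha_def]; simp only; rw [hIco]
    calc ∫ ω, (∏ i ∈ Finset.range j, (1 - h * ζ i ω * A / (B + (i:ℝ)))) ∂P
        ≤ ∫ ω, ((1 + 1/B) * ∏ i ∈ Finset.Ico 1 j, (1 - h * ζ i ω * A / (B + (i:ℝ)))) ∂P := by
          apply integral_mono (hprodint _) ((hprodint _).const_mul _)
          intro ω
          exact le_trans (le_abs_self _) (hptbound j hj ω)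
      _ = (1 + 1/B) * ∏ i ∈ Finset.Ico 1 j, c i := by
          rw [integral_const_mul, hEprod]
      _ = (1 + 1/B) * a (j - 1) := by rw [e]
  -- Part 1: bounded expectations
  have part1 : BddAbove (Set.range fun τ : ℕ =>
      ∫ ω, (∑ j ∈ Finset.Ico 1 τ,
        ∏ i ∈ Finset.range j, (1 - h * ζ i ω * A / (B + (i : ℝ)))) ∂P) := by
    refine ⟨(1 + 1/B) * ∑' j, a j, ?_⟩
    rintro x ⟨τ, rfl⟩
    refine le_trans (le_of_eq (integral_finset_sum (Finset.Ico 1 τ)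
      (f := fun j ω => ∏ i ∈ Finset.range j, (1 - h * ζ i ω * A / (B + (i:ℝ))))
      (fun j _ => hprodint _))) ?_
    calc ∑ j ∈ Finset.Ico 1 τ,
          ∫ ω, (∏ i ∈ Finset.range j, (1 - h * ζ i ω * A / (B + (i:ℝ)))) ∂P
        ≤ ∑ j ∈ Finset.Ico 1 τ, (1 + 1/B) * a (j-1) :=
          Finset.sum_le_sum fun j hj => hEb j (Finset.mem_Ico.1 hj).1
      _ = ∑ k ∈ Finset.range (τ-1), (1 + 1/B) * a k := by
          rw [Finset.sum_Ico_eq_sum_range]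
          apply Finset.sum_congr rfl
          intro k _
          congr 1
          congr 1
          omega
      _ ≤ ∑' j, ((1 + 1/B) * a j) := by
          exact Summable.sum_le_tsum _ (fun j _ => mul_nonneg hKpos.le (hanonneg j))
            (hasum.mul_left _)
      _ = (1 + 1/B) * ∑' j, a j := by rw [tsum_mul_left]
  refine ⟨part1, ?_⟩
  -- Part 2: a.s. summability
  -- X j ω = ∏_{i ∈ range (j+1)}
  have hmeasX : ∀ j : ℕ, Measurable (fun ω =>
      (‖∏ i ∈ Finset.range (j+1), (1 - h * ζ i ω * A / (B + (i:ℝ)))‖₊ : ENNReal)) :=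
    fun j => (hpmeas (Finset.range (j+1))).nnnorm.coe_nnreal_ennreal
  have hlint : ∫⁻ ω, (∑' j : ℕ,
      (‖∏ i ∈ Finset.range (j+1), (1 - h * ζ i ω * A / (B + (i:ℝ)))‖₊ : ENNReal)) ∂P ≠ ⊤ := by
    rw [lintegral_tsum (fun j => (hmeasX j).aemeasurable)]
    apply ne_of_lt
    have hle : ∀ j : ℕ, ∫⁻ ω,
        (‖∏ i ∈ Finset.range (j+1), (1 - h * ζ i ω * A / (B + (i:ℝ)))‖₊ : ENNReal) ∂P
        ≤ ENNReal.ofReal ((1 + 1/B) * a j) := by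
      intro j
      have hbd : ∀ ω, (‖∏ i ∈ Finset.range (j+1), (1 - h * ζ i ω * A / (B + (i:ℝ)))‖₊ : ENNReal)
          ≤ ENNReal.ofReal ((1 + 1/B) *
            ∏ i ∈ Finset.Ico 1 (j+1), (1 - h * ζ i ω * A / (B + (i:ℝ)))) := by
        intro ω
        rw [← enorm_eq_nnnorm, ← ofReal_norm, Real.norm_eq_abs]
        exact ENNReal.ofReal_le_ofReal (hptbound (j+1) (by omega) ω)
      calc ∫⁻ ω, (‖∏ i ∈ Finset.range (j+1), (1 - h * ζ i ω * A / (B + (i:ℝ)))‖₊ : ENNReal) ∂P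
          ≤ ∫⁻ ω, ENNReal.ofReal ((1 + 1/B) *
              ∏ i ∈ Finset.Ico 1 (j+1), (1 - h * ζ i ω * A / (B + (i:ℝ)))) ∂P :=
            lintegral_mono hbd
        _ = ENNReal.ofReal (∫ ω, ((1 + 1/B) *
              ∏ i ∈ Finset.Ico 1 (j+1), (1 - h * ζ i ω * A / (B + (i:ℝ)))) ∂P) := by
            rw [ofReal_integral_eq_lintegral_ofReal ((hprodint _).const_mul _)]
            exact ae_of_all _ fun ω => mul_nonneg hKpos.le
              (Finset.prod_nonneg fun i hi => hfac_nonneg i (Finset.mem_Ico.1 hi).1 ω)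
        _ = ENNReal.ofReal ((1 + 1/B) * a j) := by
            rw [integral_const_mul, hEprod]
    calc ∑' j, ∫⁻ ω,
          (‖∏ i ∈ Finset.range (j+1), (1 - h * ζ i ω * A / (B + (i:ℝ)))‖₊ : ENNReal) ∂P
        ≤ ∑' j, ENNReal.ofReal ((1 + 1/B) * a j) := ENNReal.tsum_le_tsum hle
      _ = ENNReal.ofReal (∑' j, (1 + 1/B) * a j) :=
          (ENNReal.ofReal_tsum_of_nonneg (fun j => mul_nonneg hKpos.le (hanonneg j))
            (hasum.mul_left _)).symm
      _ < ⊤ := ENNReal.ofReal_lt_top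
  have hae := ae_lt_top (Measurable.ennreal_tsum (fun j => hmeasX j)) hlint
  filter_upwards [hae] with ω hω
  have hsum : Summable (fun j : ℕ =>
      ∏ i ∈ Finset.range (j+1), (1 - h * ζ i ω * A / (B + (i:ℝ)))) := by
    apply Summable.of_nnnorm
    exact ENNReal.tsum_coe_ne_top_iff_summable.1 hω.ne
  refine ⟨hsum, ?_⟩
  have ht := hsum.hasSum.tendsto_sum_nat
  have ht2 := ht.comp (tendsto_sub_atTop_nat 1)
  convert ht2 using 1
  funext τ
  simp only [Function.comp]
  rw [Finset.sum_Ico_eq_sum_range]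
  apply Finset.sum_congr rfl
  intro k _
  rw [Nat.add_comm 1 k]
end

section
/- Consider the Cucker–Smale system with random failures: k ≥ 2 agents with positions X_i(t) ∈ ℝ³ and velocities V_i(t) ∈ ℝ³ evolving by X_i(t+h) = X_i(t) + h V_i(t) and V_i(t+h) = V_i(t) + h Σ_{j=1}^k a_{ij}(t)(V_j(t) − V_i(t)), where 0 < h ≤ 1/k and a_{ij}(t) = ζ^{ij}_t (1 + ‖X_i(t) − X_j(t)‖)^{−α} for i ≠ j, with symmetric ζ^{ij}_t = ζ^{ji}_t i.i.d. Bernoulli(1−λ), λ ∈ (0,1), 0 ≤ α < 1. Let v[t] = (V_1(th) − V̄(0), …, V_k(th) − V̄(0)) denote the relative velocity, where V̄(0) = (1/k)Σ_j V_j(0). Then almost surely Σ_{t=0}^∞ ‖v[t]‖ < ∞, where ‖·‖ is the Euclidean norm on (ℝ³)^k. -/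
open scoped BigOperators
open MeasureTheory ProbabilityTheory Filter

/-- Jensen-type bound for sub-stochastic symmetric coefficient matrices. -/
lemma substoch_bound {k : ℕ} {E : Type*} [NormedAddCommGroup E] [NormedSpace ℝ E]
    (M : Fin k → Fin k → ℝ) (u : Fin k → E) (s : ℝ)
    (hM0 : ∀ i j, 0 ≤ M i j) (hrow : ∀ i, ∑ j, M i j = s)
    (hcol : ∀ j, ∑ i, M i j = s) :
    ∑ i, ‖∑ j, M i j • u j‖ ^ 2 ≤ s ^ 2 * ∑ j, ‖u j‖ ^ 2 := by
  have step1 : ∀ i, ‖∑ j, M i j • u j‖ ≤ ∑ j, M i j * ‖u j‖ := by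
    intro i
    refine (norm_sum_le _ _).trans (le_of_eq ?_)
    refine Finset.sum_congr rfl fun j _ => ?_
    rw [norm_smul, Real.norm_eq_abs, abs_of_nonneg (hM0 i j)]
  have step2 : ∀ i, (∑ j, M i j * ‖u j‖) ^ 2 ≤ s * ∑ j, M i j * ‖u j‖ ^ 2 := by
    intro i
    have := Finset.sum_sq_le_sum_mul_sum_of_sq_eq_mul (Finset.univ : Finset (Fin k))
      (r := fun j => M i j * ‖u j‖) (f := fun j => M i j) (g := fun j => M i j * ‖u j‖ ^ 2)
      (fun j _ => hM0 i j) (fun j _ => mul_nonneg (hM0 i j) (sq_nonneg _))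
      (fun j _ => by ring)
    calc (∑ j, M i j * ‖u j‖) ^ 2 ≤ (∑ j, M i j) * ∑ j, M i j * ‖u j‖ ^ 2 := this
      _ = s * ∑ j, M i j * ‖u j‖ ^ 2 := by rw [hrow i]
  calc ∑ i, ‖∑ j, M i j • u j‖ ^ 2
      ≤ ∑ i, (∑ j, M i j * ‖u j‖) ^ 2 := by
        refine Finset.sum_le_sum fun i _ => ?_
        exact pow_le_pow_left₀ (norm_nonneg _) (step1 i) 2
    _ ≤ ∑ i, s * ∑ j, M i j * ‖u j‖ ^ 2 := Finset.sum_le_sum fun i _ => step2 i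
    _ = s * ∑ j, (∑ i, M i j) * ‖u j‖ ^ 2 := by
        rw [← Finset.mul_sum, Finset.sum_comm]
        congr 1; refine Finset.sum_congr rfl fun j _ => ?_
        rw [Finset.sum_mul]
    _ = s ^ 2 * ∑ j, ‖u j‖ ^ 2 := by
        simp_rw [hcol]
        rw [← Finset.mul_sum]; ring

lemma integral_finset_prod_of_iIndep {Ω ι : Type*} [MeasurableSpace Ω] {P : Measure Ω}
    [IsProbabilityMeasure P] (f : ι → Ω → ℝ) (hmeas : ∀ i, Measurable (f i))
    (hindep : iIndepFun f P) (F : Finset ι) :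
    ∫ ω, ∏ i ∈ F, f i ω ∂P = ∏ i ∈ F, ∫ ω, f i ω ∂P := by
  classical
  induction F using Finset.induction with
  | empty => simp
  | @insert a F ha ih =>
    have hprodmeas : AEStronglyMeasurable (∏ i ∈ F, f i) P := by
      rw [Finset.prod_fn]
      exact (Finset.measurable_prod F fun i _ => hmeas i).aestronglyMeasurable
    have hindep2 : IndepFun (∏ i ∈ F, f i) (f a) P :=
      hindep.indepFun_finsetProd_of_notMem hmeas ha
    have hmul := hindep2.integral_mul_eq_mul_integral hprodmeas (hmeas a).aestronglyMeasurable
    have heq : ∀ ω, ∏ i ∈ insert a F, f i ω = ((∏ i ∈ F, f i) * f a) ω := by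
      intro ω
      rw [Finset.prod_insert ha]
      simp [Finset.prod_apply, mul_comm]
    calc ∫ ω, ∏ i ∈ insert a F, f i ω ∂P = ∫ ω, ((∏ i ∈ F, f i) * f a) ω ∂P := by
          exact integral_congr_ae (Filter.EventuallyEq.of_eq (funext heq))
      _ = (∫ ω, (∏ i ∈ F, f i) ω ∂P) * ∫ ω, f a ω ∂P := hmul
      _ = (∫ ω, ∏ i ∈ F, f i ω ∂P) * ∫ ω, f a ω ∂P := by
          congr 1
          exact integral_congr_ae (Filter.EventuallyEq.of_eq (funext fun ω => Finset.prod_apply ω F f))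
      _ = ∏ i ∈ insert a F, ∫ ω, f i ω ∂P := by
          rw [Finset.prod_insert ha, ih, mul_comm]

lemma summable_exp_neg_rpow_s13 {c ε : ℝ} (hc : 0 < c) (hε : 0 < ε) :
    Summable fun t : ℕ => Real.exp (-(c * (t : ℝ) ^ ε)) := by
  obtain ⟨m, hm⟩ : ∃ m : ℕ, 2 ≤ ε * m := by
    refine ⟨⌈2 / ε⌉₊, ?_⟩
    have h1 : 2 / ε ≤ (⌈2 / ε⌉₊ : ℝ) := Nat.le_ceil _
    calc (2:ℝ) = ε * (2 / ε) := by field_simp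
      _ ≤ ε * ⌈2 / ε⌉₊ := by nlinarith
  set K : ℝ := (m.factorial : ℝ) / c ^ m with hK
  have bound : ∀ t : ℕ, 1 ≤ t → Real.exp (-(c * (t : ℝ) ^ ε)) ≤ K / (t : ℝ) ^ 2 := by
    intro t ht
    have ht1 : (1 : ℝ) ≤ (t : ℝ) := by exact_mod_cast ht
    have ht0 : (0 : ℝ) < (t : ℝ) := by linarith
    have hrp : (0 : ℝ) < (t : ℝ) ^ ε := Real.rpow_pos_of_pos ht0 ε
    set x : ℝ := c * (t : ℝ) ^ ε with hx
    have hx0 : 0 < x := mul_pos hc hrp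
    have hexp : x ^ m / (m.factorial : ℝ) ≤ Real.exp x := by
      have h1 : x ^ m / (m.factorial : ℝ) ≤ ∑ i ∈ Finset.range (m + 1), x ^ i / (i.factorial : ℝ) :=
        Finset.single_le_sum (f := fun i => x ^ i / (i.factorial : ℝ))
          (fun i _ => by positivity) (Finset.self_mem_range_succ m)
      exact h1.trans (Real.sum_le_exp_of_nonneg hx0.le _)
    have h2 : Real.exp (-x) ≤ (m.factorial : ℝ) / x ^ m := by
      rw [Real.exp_neg]
      have : 1 / Real.exp x ≤ 1 / (x ^ m / (m.factorial : ℝ)) :=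
        one_div_le_one_div_of_le (by positivity) hexp
      rw [one_div, one_div_div] at this
      exact this
    have hxm : c ^ m * (t : ℝ) ^ 2 ≤ x ^ m := by
      rw [hx, mul_pow]
      have : ((t : ℝ) ^ ε) ^ m = (t : ℝ) ^ (ε * m) := by
        rw [← Real.rpow_natCast ((t:ℝ) ^ ε) m, ← Real.rpow_mul ht0.le]
      rw [this]
      have h3 : (t : ℝ) ^ (2:ℝ) ≤ (t : ℝ) ^ (ε * m) :=
        Real.rpow_le_rpow_of_exponent_le ht1 hm
      rw [show ((2:ℝ)) = ((2:ℕ):ℝ) by norm_num, Real.rpow_natCast] at h3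
      nlinarith [pow_pos hc m]
    refine h2.trans ?_
    rw [div_le_div_iff₀ (by positivity) (by positivity)]
    calc (m.factorial : ℝ) * (t:ℝ)^2 = (m.factorial / c ^ m) * (c ^ m * (t:ℝ)^2) := by
          field_simp
      _ ≤ K * x ^ m := by
          rw [hK]
          exact mul_le_mul_of_nonneg_left hxm (by positivity)
  have hsum2 : Summable (fun t : ℕ => K / ((t+1 : ℕ) : ℝ) ^ 2) := by
    have : Summable (fun t : ℕ => K * (1 / ((t : ℝ)) ^ 2)) :=
      (Real.summable_one_div_nat_pow.2 one_lt_two).mul_left K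
    have := (summable_nat_add_iff 1).2 this
    simpa [div_eq_mul_inv, one_div] using this
  rw [← summable_nat_add_iff 1]
  refine Summable.of_nonneg_of_le (fun t => (Real.exp_pos _).le) (fun t => ?_) hsum2
  exact bound (t+1) (Nat.le_add_left 1 t)

set_option maxHeartbeats 1000000 in
/-- **Summability of relative velocities for the Cucker–Smale model with random
failures, sub-linear case.** Under the Cucker–Smale dynamics with time step
`0 < h ≤ 1/k`, weights `a_{ij}(t) = ζ^{ij}_t (1 + ‖X_i − X_j‖)^(−α)` with
`0 ≤ α < 1`, and i.i.d. Bernoulli(1−λ) failure variables `ζ^{ij}_t` (symmetric in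
`(i,j)`, independent over unordered pairs of distinct agents and time steps),
almost surely `Σ_t ‖v[t]‖ < ∞`, where `v[t]` is the velocity vector relative to
the initial mean velocity and the norm is the Euclidean norm on `(ℝ³)^k`. -/
theorem stmt13 (k : ℕ) (hk : 2 ≤ k) (h : ℝ) (hh0 : 0 < h) (hhk : h ≤ 1 / k)
    (α : ℝ) (hα0 : 0 ≤ α) (hα1 : α < 1) (lam : ℝ) (hlam0 : 0 < lam) (hlam1 : lam < 1)
    (Ω : Type*) [MeasurableSpace Ω] (P : Measure Ω) [IsProbabilityMeasure P]
    (ζ : ℕ → Fin k → Fin k → Ω → ℝ)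
    (hζmeas : ∀ t i j, Measurable (ζ t i j))
    (hζsymm : ∀ t i j, ζ t i j = ζ t j i)
    (hζval : ∀ t i j ω, ζ t i j ω = 0 ∨ ζ t i j ω = 1)
    (hζform : ∀ t i j, i ≠ j → P {ω | ζ t i j ω = 1} = ENNReal.ofReal (1 - lam))
    (hζfail : ∀ t i j, i ≠ j → P {ω | ζ t i j ω = 0} = ENNReal.ofReal lam)
    (hζindep : iIndepFun
      (fun q : ℕ × {p : Fin k × Fin k // p.1 < p.2} => ζ q.1 q.2.1.1 q.2.1.2) P)
    (X V : ℕ → Ω → Fin k → EuclideanSpace ℝ (Fin 3))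
    (X0 V0 : Fin k → EuclideanSpace ℝ (Fin 3))
    (hX0 : ∀ ω, X 0 ω = X0) (hV0 : ∀ ω, V 0 ω = V0)
    (hdynX : ∀ t ω i, X (t + 1) ω i = X t ω i + h • V t ω i)
    (hdynV : ∀ t ω i, V (t + 1) ω i = V t ω i +
      h • ∑ j, (ζ t i j ω * (1 + ‖X t ω i - X t ω j‖) ^ (-α)) •
        (V t ω j - V t ω i)) :
    ∀ᵐ ω ∂P,
      Summable fun t : ℕ =>
        Real.sqrt (∑ i, ‖V t ω i - (k : ℝ)⁻¹ • ∑ j, V0 j‖ ^ 2) := by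
  classical
  have hk0 : (0:ℝ) < (k:ℝ) := by
    have : 0 < k := lt_of_lt_of_le (by norm_num) hk
    exact_mod_cast this
  have hkh : (k:ℝ) * h ≤ 1 := by
    rw [div_eq_mul_inv, one_mul] at hhk
    calc (k:ℝ) * h ≤ (k:ℝ) * (k:ℝ)⁻¹ := by nlinarith
      _ = 1 := mul_inv_cancel₀ (ne_of_gt hk0)
  set Vbar : EuclideanSpace ℝ (Fin 3) := (k : ℝ)⁻¹ • ∑ j, V0 j with hVbar
  set W : ℕ → Ω → ℝ := fun t ω => ∑ i, ‖V t ω i - Vbar‖ ^ 2 with hWdef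
  -- the coupling weights, with zero diagonal
  set w : ℕ → Ω → Fin k → Fin k → ℝ := fun t ω i j =>
    if i = j then 0 else ζ t i j ω * (1 + ‖X t ω i - X t ω j‖) ^ (-α) with hwdef
  have hζ01 : ∀ t i j ω, 0 ≤ ζ t i j ω ∧ ζ t i j ω ≤ 1 := by
    intro t i j ω
    rcases hζval t i j ω with h1 | h1 <;> rw [h1] <;> norm_num
  have hw0 : ∀ t ω i j, 0 ≤ w t ω i j := by
    intro t ω i j
    simp only [hwdef]
    split
    · exact le_refl 0
    · exact mul_nonneg (hζ01 t i j ω).1 (Real.rpow_nonneg (by positivity) _)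
  have hw1 : ∀ t ω i j, w t ω i j ≤ 1 := by
    intro t ω i j
    simp only [hwdef]
    split
    · norm_num
    · have h1 : (1 + ‖X t ω i - X t ω j‖) ^ (-α) ≤ 1 :=
        Real.rpow_le_one_of_one_le_of_nonpos
          (by linarith [norm_nonneg (X t ω i - X t ω j)]) (neg_nonpos.2 hα0)
      exact mul_le_one₀ (hζ01 t i j ω).2 (Real.rpow_nonneg (by positivity) _) h1
  have hwsymm : ∀ t ω i j, w t ω i j = w t ω j i := by
    intro t ω i j
    simp only [hwdef]
    rcases eq_or_ne i j with rfl | hij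
    · simp
    · rw [if_neg hij, if_neg (Ne.symm hij), hζsymm t i j, norm_sub_rev]
  have hwdiag : ∀ t ω i, w t ω i i = 0 := by
    intro t ω i; simp [hwdef]
  have hwsum : ∀ t ω i, ∑ j, w t ω i j ≤ (k:ℝ) - 1 := by
    intro t ω i
    have he : ∑ j ∈ Finset.univ.erase i, w t ω i j = ∑ j, w t ω i j :=
      Finset.sum_erase _ (hwdiag t ω i)
    rw [← he]
    calc ∑ j ∈ Finset.univ.erase i, w t ω i j ≤ ∑ _j ∈ Finset.univ.erase i, (1:ℝ) :=
          Finset.sum_le_sum fun j _ => hw1 t ω i j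
      _ = ((Finset.univ.erase i).card : ℝ) := by rw [Finset.sum_const, nsmul_eq_mul, mul_one]
      _ = (k:ℝ) - 1 := by
          rw [Finset.card_erase_of_mem (Finset.mem_univ i), Finset.card_univ, Fintype.card_fin]
          have hk1 : 1 ≤ k := le_trans (by norm_num) hk
          rw [Nat.cast_sub hk1, Nat.cast_one]
  set M : ℕ → Ω → Fin k → Fin k → ℝ := fun t ω i j =>
    (if i = j then 1 - h * ∑ j', w t ω i j' else 0) + h * w t ω i j with hMdef
  have hMrow : ∀ t ω i, ∑ j, M t ω i j = 1 := by
    intro t ω i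
    simp only [hMdef]
    rw [Finset.sum_add_distrib, Finset.sum_ite_eq, if_pos (Finset.mem_univ i), ← Finset.mul_sum]
    ring
  have hMcol : ∀ t ω j, ∑ i, M t ω i j = 1 := by
    intro t ω j
    simp only [hMdef]
    rw [Finset.sum_add_distrib, Finset.sum_ite_eq', if_pos (Finset.mem_univ j)]
    have h1 : ∑ i, h * w t ω i j = h * ∑ i, w t ω j i := by
      rw [← Finset.mul_sum]
      congr 1
      exact Finset.sum_congr rfl fun i _ => hwsymm t ω i j
    rw [h1]
    ring
  have hM0 : ∀ t ω i j, 0 ≤ M t ω i j := by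
    intro t ω i j
    simp only [hMdef]
    rcases eq_or_ne i j with rfl | hij
    · rw [if_pos rfl, hwdiag, mul_zero, add_zero]
      have h1 := hwsum t ω i
      nlinarith
    · rw [if_neg hij, zero_add]
      exact mul_nonneg hh0.le (hw0 _ _ _ _)
  have hdynM : ∀ t ω i, V (t+1) ω i = ∑ j, M t ω i j • V t ω j := by
    intro t ω i
    have hsummand : ∀ j, (ζ t i j ω * (1 + ‖X t ω i - X t ω j‖) ^ (-α)) • (V t ω j - V t ω i)
        = w t ω i j • (V t ω j - V t ω i) := by
      intro j
      rcases eq_or_ne i j with rfl | hij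
      · simp
      · simp only [hwdef]; rw [if_neg hij]
    rw [hdynV t ω i]
    simp_rw [hsummand]
    simp only [hMdef]
    simp_rw [add_smul, Finset.sum_add_distrib, ite_smul, zero_smul]
    rw [Finset.sum_ite_eq, if_pos (Finset.mem_univ i)]
    have hL : ∑ j, w t ω i j • (V t ω j - V t ω i)
        = ∑ j, w t ω i j • V t ω j - (∑ j, w t ω i j) • V t ω i := by
      rw [Finset.sum_smul, ← Finset.sum_sub_distrib]
      exact Finset.sum_congr rfl fun j _ => smul_sub _ _ _
    rw [hL, smul_sub, sub_smul, one_smul]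
    have hhs : h • ((∑ j, w t ω i j) • V t ω i) = (h * ∑ j, w t ω i j) • V t ω i :=
      smul_smul _ _ _
    have hhA : h • ∑ j, w t ω i j • V t ω j = ∑ j, (h * w t ω i j) • V t ω j := by
      rw [Finset.smul_sum]
      exact Finset.sum_congr rfl fun j _ => smul_smul _ _ _
    rw [hhs, hhA]
    abel
  have hVsum : ∀ t ω, ∑ i, V t ω i = ∑ i, V0 i := by
    intro t
    induction t with
    | zero => intro ω; simp [hV0 ω]
    | succ t ih =>
      intro ω
      calc ∑ i, V (t+1) ω i = ∑ i, ∑ j, M t ω i j • V t ω j :=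
            Finset.sum_congr rfl fun i _ => hdynM t ω i
        _ = ∑ j, (∑ i, M t ω i j) • V t ω j := by
            rw [Finset.sum_comm]
            exact Finset.sum_congr rfl fun j _ => (Finset.sum_smul).symm
        _ = ∑ j, V t ω j := by
            refine Finset.sum_congr rfl fun j _ => ?_
            rw [hMcol t ω j, one_smul]
        _ = ∑ i, V0 i := ih ω
  have hvsum0 : ∀ t ω, ∑ i, (V t ω i - Vbar) = 0 := by
    intro t ω
    rw [Finset.sum_sub_distrib, hVsum t ω, Finset.sum_const, Finset.card_univ, Fintype.card_fin]
    rw [hVbar]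
    rw [← Nat.cast_smul_eq_nsmul ℝ k, smul_smul, mul_inv_cancel₀ (ne_of_gt hk0), one_smul]
    exact sub_self _
  have hvdyn : ∀ t ω i, V (t+1) ω i - Vbar = ∑ j, M t ω i j • (V t ω j - Vbar) := by
    intro t ω i
    have h1 : ∑ j, M t ω i j • (V t ω j - Vbar)
        = ∑ j, M t ω i j • V t ω j - (∑ j, M t ω i j) • Vbar := by
      rw [Finset.sum_smul, ← Finset.sum_sub_distrib]
      exact Finset.sum_congr rfl fun j _ => smul_sub _ _ _
    rw [h1, hMrow, one_smul, ← hdynM]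
  have hWmono : ∀ t ω, W (t+1) ω ≤ W t ω := by
    intro t ω
    simp only [hWdef]
    calc ∑ i, ‖V (t+1) ω i - Vbar‖^2 = ∑ i, ‖∑ j, M t ω i j • (V t ω j - Vbar)‖^2 :=
          Finset.sum_congr rfl fun i _ => by rw [hvdyn t ω i]
      _ ≤ 1^2 * ∑ j, ‖V t ω j - Vbar‖^2 :=
          substoch_bound (M t ω) _ 1 (hM0 t ω) (hMrow t ω) (hMcol t ω)
      _ = ∑ i, ‖V t ω i - Vbar‖^2 := by rw [one_pow, one_mul]
  have hWmono' : ∀ s t ω, s ≤ t → W t ω ≤ W s ω := by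
    intro s t ω hst
    induction t, hst using Nat.le_induction with
    | base => exact le_refl _
    | succ n _ ih => exact (hWmono n ω).trans ih
  have hW0 : ∀ ω, W 0 ω = ∑ i, ‖V0 i - Vbar‖^2 := by
    intro ω; simp only [hWdef]; rw [hV0 ω]
  set B0 : ℝ := Real.sqrt (∑ i, ‖V0 i - Vbar‖^2) with hB0
  have hB0nonneg : 0 ≤ B0 := Real.sqrt_nonneg _
  have hWnonneg : ∀ t ω, 0 ≤ W t ω := fun t ω => Finset.sum_nonneg fun i _ => sq_nonneg _
  have hvb : ∀ t ω i, ‖V t ω i - Vbar‖ ≤ B0 := by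
    intro t ω i
    have h1 : ‖V t ω i - Vbar‖^2 ≤ W t ω :=
      Finset.single_le_sum (f := fun i => ‖V t ω i - Vbar‖^2)
        (fun i _ => sq_nonneg _) (Finset.mem_univ i)
    have h2 : W t ω ≤ W 0 ω := hWmono' 0 t ω (Nat.zero_le t)
    have h3 := Real.sqrt_le_sqrt (h1.trans h2)
    rwa [Real.sqrt_sq (norm_nonneg _), hW0 ω] at h3
  have hVdiff : ∀ t ω i j, ‖V t ω i - V t ω j‖ ≤ 2 * B0 := by
    intro t ω i j
    calc ‖V t ω i - V t ω j‖ = ‖(V t ω i - Vbar) - (V t ω j - Vbar)‖ := by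
          congr 1; abel
      _ ≤ ‖V t ω i - Vbar‖ + ‖V t ω j - Vbar‖ := norm_sub_le _ _
      _ ≤ 2*B0 := by linarith [hvb t ω i, hvb t ω j]
  set D0 : ℝ := 2 * ∑ m, ‖X0 m‖ with hD0def
  have hD0 : 0 ≤ D0 := by
    rw [hD0def]
    positivity
  have hXd : ∀ t ω i j, ‖X t ω i - X t ω j‖ ≤ D0 + 2*h*B0*t := by
    intro t
    induction t with
    | zero =>
      intro ω i j
      rw [hX0 ω]
      have h1 : ‖X0 i‖ ≤ ∑ m, ‖X0 m‖ :=
        Finset.single_le_sum (f := fun m => ‖X0 m‖) (fun m _ => norm_nonneg _) (Finset.mem_univ i)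
      have h2 : ‖X0 j‖ ≤ ∑ m, ‖X0 m‖ :=
        Finset.single_le_sum (f := fun m => ‖X0 m‖) (fun m _ => norm_nonneg _) (Finset.mem_univ j)
      have h3 : ‖X0 i - X0 j‖ ≤ ‖X0 i‖ + ‖X0 j‖ := norm_sub_le _ _
      rw [hD0def]
      push_cast
      linarith
    | succ t ih =>
      intro ω i j
      have hXe : X (t+1) ω i - X (t+1) ω j = (X t ω i - X t ω j) + h • (V t ω i - V t ω j) := by
        rw [hdynX, hdynX, smul_sub]
        abel
      rw [hXe]
      calc ‖(X t ω i - X t ω j) + h • (V t ω i - V t ω j)‖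
          ≤ ‖X t ω i - X t ω j‖ + ‖h • (V t ω i - V t ω j)‖ := norm_add_le _ _
        _ ≤ (D0 + 2*h*B0*t) + h * (2*B0) := by
            have h4 : ‖h • (V t ω i - V t ω j)‖ = h * ‖V t ω i - V t ω j‖ := by
              rw [norm_smul, Real.norm_eq_abs, abs_of_pos hh0]
            rw [h4]
            have h5 := mul_le_mul_of_nonneg_left (hVdiff t ω i j) hh0.le
            linarith [ih ω i j]
        _ = D0 + 2*h*B0*(t+1 : ℕ) := by push_cast; ring
  set C : ℝ := 1 + D0 + 2*h*B0 with hCdef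
  have hC1 : 1 ≤ C := by rw [hCdef]; nlinarith
  have hXC : ∀ t ω i j, 1 + ‖X t ω i - X t ω j‖ ≤ C * (1 + (t:ℕ)) := by
    intro t ω i j
    have h1 := hXd t ω i j
    have ht0 : (0:ℝ) ≤ (t:ℕ) := Nat.cast_nonneg t
    rw [hCdef]
    nlinarith
  have hCt : ∀ t:ℕ, (1:ℝ) ≤ C * (1+(t:ℝ)) := by
    intro t
    have ht0 : (0:ℝ) ≤ (t:ℝ) := Nat.cast_nonneg t
    nlinarith
  set A : ℕ → ℝ := fun t => (C * (1 + (t:ℝ))) ^ (-α) with hAdef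
  have hApos : ∀ t, 0 < A t := by
    intro t; simp only [hAdef]
    exact Real.rpow_pos_of_pos (by linarith [hCt t]) _
  have hA1 : ∀ t, A t ≤ 1 := by
    intro t; simp only [hAdef]
    exact Real.rpow_le_one_of_one_le_of_nonpos (hCt t) (neg_nonpos.2 hα0)
  set β : ℕ → ℝ := fun t => (k:ℝ) * h * A t with hβdef
  have hβpos : ∀ t, 0 < β t := by
    intro t; simp only [hβdef]
    exact mul_pos (mul_pos hk0 hh0) (hApos t)
  have hβ1 : ∀ t, β t ≤ 1 := by
    intro t; simp only [hβdef]
    calc (k:ℝ) * h * A t ≤ (k:ℝ) * h * 1 := by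
          have := hA1 t
          nlinarith [mul_pos hk0 hh0]
      _ ≤ 1 := by rw [mul_one]; exact hkh
  -- contraction when all links are active
  have hcontr : ∀ t ω, (∀ i j, i ≠ j → ζ t i j ω = 1) →
      W (t+1) ω ≤ (1 - β t)^2 * W t ω := by
    intro t ω hall
    set R : Fin k → Fin k → ℝ := fun i j => M t ω i j - h * A t with hRdef
    have hwA : ∀ i j, i ≠ j → h * A t ≤ h * w t ω i j := by
      intro i j hij
      have hwv : w t ω i j = (1 + ‖X t ω i - X t ω j‖) ^ (-α) := by
        simp only [hwdef]
        rw [if_neg hij, hall i j hij, one_mul]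
      rw [hwv]
      refine mul_le_mul_of_nonneg_left ?_ hh0.le
      simp only [hAdef]
      exact Real.rpow_le_rpow_of_nonpos (by positivity) (hXC t ω i j) (neg_nonpos.2 hα0)
    have hR0 : ∀ i j, 0 ≤ R i j := by
      intro i j
      simp only [hRdef, hMdef]
      rcases eq_or_ne i j with rfl | hij
      · rw [if_pos rfl, hwdiag, mul_zero, add_zero]
        have h1 := hwsum t ω i
        have h2 := hA1 t
        have h3 := (hApos t).le
        nlinarith
      · rw [if_neg hij, zero_add]
        have := hwA i j hij
        linarith
    have hRrow : ∀ i, ∑ j, R i j = 1 - β t := by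
      intro i
      simp only [hRdef]
      rw [Finset.sum_sub_distrib, hMrow, Finset.sum_const, Finset.card_univ, Fintype.card_fin,
        nsmul_eq_mul]
      simp only [hβdef]; ring
    have hRcol : ∀ j, ∑ i, R i j = 1 - β t := by
      intro j
      simp only [hRdef]
      rw [Finset.sum_sub_distrib, hMcol, Finset.sum_const, Finset.card_univ, Fintype.card_fin,
        nsmul_eq_mul]
      simp only [hβdef]; ring
    have hRdyn : ∀ i, V (t+1) ω i - Vbar = ∑ j, R i j • (V t ω j - Vbar) := by
      intro i
      have h1 : ∑ j, R i j • (V t ω j - Vbar)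
          = ∑ j, M t ω i j • (V t ω j - Vbar) - (h*A t) • ∑ j, (V t ω j - Vbar) := by
        rw [Finset.smul_sum, ← Finset.sum_sub_distrib]
        refine Finset.sum_congr rfl fun j _ => ?_
        simp only [hRdef]
        rw [sub_smul]
      rw [h1, hvsum0 t ω, smul_zero, sub_zero, ← hvdyn]
    calc W (t+1) ω = ∑ i, ‖∑ j, R i j • (V t ω j - Vbar)‖^2 := by
          simp only [hWdef]
          exact Finset.sum_congr rfl fun i _ => by rw [hRdyn i]
      _ ≤ (1 - β t)^2 * ∑ j, ‖V t ω j - Vbar‖^2 :=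
          substoch_bound R _ _ hR0 hRrow hRcol
      _ = (1 - β t)^2 * W t ω := by simp only [hWdef]
  -- product of link indicators over all pairs at time t
  set S := {p : Fin k × Fin k // p.1 < p.2} with hSdef
  set Pi : ℕ → Ω → ℝ := fun t ω => ∏ p : S, ζ t p.1.1 p.1.2 ω with hPidef
  have hPival : ∀ t ω, Pi t ω = 0 ∨ Pi t ω = 1 := by
    intro t ω
    by_cases hex : ∃ p : S, ζ t p.1.1 p.1.2 ω = 0
    · left
      obtain ⟨p, hp⟩ := hex
      simp only [hPidef]
      exact Finset.prod_eq_zero (Finset.mem_univ p) hp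
    · right
      push_neg at hex
      simp only [hPidef]
      refine Finset.prod_eq_one fun p _ => ?_
      rcases hζval t p.1.1 p.1.2 ω with h0 | h1
      · exact absurd h0 (hex p)
      · exact h1
  have hPione : ∀ t ω, Pi t ω = 1 → ∀ i j, i ≠ j → ζ t i j ω = 1 := by
    intro t ω hP i j hij
    have key : ∀ (a b : Fin k), a < b → ζ t a b ω = 1 := by
      intro a b hab
      rcases hζval t a b ω with h0 | h1
      · exfalso
        have hz : Pi t ω = 0 := by
          simp only [hPidef]
          exact Finset.prod_eq_zero (Finset.mem_univ (⟨(a,b),hab⟩ : S)) h0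
        rw [hP] at hz
        norm_num at hz
      · exact h1
    rcases lt_or_gt_of_ne hij with hlt | hgt
    · exact key i j hlt
    · rw [hζsymm]; exact key j i hgt
  have hPimeas : ∀ t, Measurable (fun ω => Pi t ω) := by
    intro t
    simp only [hPidef]
    exact Finset.measurable_prod _ fun p _ => hζmeas t p.1.1 p.1.2
  set g : ℕ → Ω → ℝ := fun t ω => 1 + (Real.exp (-β t) - 1) * Pi t ω with hgdef
  have hgval : ∀ t ω, g t ω = Real.exp (-(β t * Pi t ω)) := by
    intro t ω
    rcases hPival t ω with h0 | h1
    · simp only [hgdef]; rw [h0]; simp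
    · simp only [hgdef]; rw [h1]; simp
  have hgpos : ∀ t ω, 0 < g t ω := by
    intro t ω; rw [hgval]; exact Real.exp_pos _
  have hg1 : ∀ t ω, g t ω ≤ 1 := by
    intro t ω
    rw [hgval, Real.exp_le_one_iff, neg_nonpos]
    rcases hPival t ω with h0 | h1
    · rw [h0, mul_zero]
    · rw [h1, mul_one]; exact (hβpos t).le
  have hgmeas : ∀ t, Measurable (fun ω => g t ω) := by
    intro t
    simp only [hgdef]
    exact measurable_const.add (measurable_const.mul (hPimeas t))
  set G : ℕ → Ω → ℝ := fun t ω => ∏ s ∈ Finset.range t, g s ω with hGdef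
  have hGpos : ∀ t ω, 0 < G t ω := by
    intro t ω; simp only [hGdef]
    exact Finset.prod_pos fun s _ => hgpos s ω
  have hG1 : ∀ t ω, G t ω ≤ 1 := by
    intro t ω; simp only [hGdef]
    exact Finset.prod_le_one (fun s _ => (hgpos s ω).le) (fun s _ => hg1 s ω)
  have hGmeas : ∀ t, Measurable (fun ω => G t ω) := by
    intro t
    simp only [hGdef]
    exact Finset.measurable_prod _ fun s _ => hgmeas s
  have hGint : ∀ t, Integrable (fun ω => G t ω) P := by
    intro t
    refine Integrable.mono' (integrable_const (1:ℝ)) (hGmeas t).aestronglyMeasurable ?_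
    refine Filter.Eventually.of_forall fun ω => ?_
    rw [Real.norm_eq_abs, abs_of_pos (hGpos t ω)]
    exact hG1 t ω
  -- pathwise bound
  have hNle : ∀ t ω, Real.sqrt (W t ω) ≤ G t ω * B0 := by
    intro t
    induction t with
    | zero =>
      intro ω
      have hG0 : G 0 ω = 1 := by simp [hGdef]
      rw [hG0, one_mul, hW0 ω]
    | succ t ih =>
      intro ω
      have hstep : Real.sqrt (W (t+1) ω) ≤ g t ω * Real.sqrt (W t ω) := by
        rcases hPival t ω with h0 | h1
        · have hg1' : g t ω = 1 := by rw [hgval, h0, mul_zero, neg_zero, Real.exp_zero]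
          rw [hg1', one_mul]
          exact Real.sqrt_le_sqrt (hWmono t ω)
        · have hζ1 := hPione t ω h1
          have hc := hcontr t ω hζ1
          have hβle := hβ1 t
          have hs : Real.sqrt (W (t+1) ω) ≤ (1 - β t) * Real.sqrt (W t ω) := by
            have h2 : Real.sqrt (W (t+1) ω) ≤ Real.sqrt ((1-β t)^2 * W t ω) :=
              Real.sqrt_le_sqrt hc
            rwa [Real.sqrt_mul (sq_nonneg _), Real.sqrt_sq (by linarith)] at h2
          refine hs.trans ?_
          have hgb : (1 - β t) ≤ g t ω := by
            rw [hgval, h1, mul_one]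
            linarith [Real.add_one_le_exp (-β t)]
          exact mul_le_mul_of_nonneg_right hgb (Real.sqrt_nonneg _)
      calc Real.sqrt (W (t+1) ω) ≤ g t ω * Real.sqrt (W t ω) := hstep
        _ ≤ g t ω * (G t ω * B0) := mul_le_mul_of_nonneg_left (ih ω) (hgpos t ω).le
        _ = G (t+1) ω * B0 := by
            simp only [hGdef]
            rw [Finset.prod_range_succ]
            ring
  -- integral computations
  set m := Fintype.card S with hmdef
  set p : ℝ := (1 - lam)^m with hpdef
  have hl1 : (0:ℝ) < 1 - lam := by linarith
  have hp0 : 0 < p := pow_pos hl1 m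
  have hp1 : p ≤ 1 := pow_le_one₀ hl1.le (by linarith)
  have hζint : ∀ (t:ℕ) (i j : Fin k), i ≠ j → ∫ ω, ζ t i j ω ∂P = 1 - lam := by
    intro t i j hij
    have hms : MeasurableSet {ω | ζ t i j ω = 1} := hζmeas t i j (measurableSet_singleton 1)
    have heq : ζ t i j = Set.indicator {ω | ζ t i j ω = 1} (fun _ => (1:ℝ)) := by
      funext ω
      by_cases hmem : ω ∈ {ω' | ζ t i j ω' = 1}
      · rw [Set.indicator_of_mem hmem]; exact hmem
      · rw [Set.indicator_of_notMem hmem]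
        rcases hζval t i j ω with h0 | h1
        · exact h0
        · exact absurd h1 hmem
    rw [heq, integral_indicator_const (1:ℝ) hms, smul_eq_mul, mul_one, measureReal_def, hζform t i j hij,
      ENNReal.toReal_ofReal (by linarith)]
  have hζqmeas : ∀ q : ℕ × S, Measurable (fun ω => ζ q.1 q.2.1.1 q.2.1.2 ω) :=
    fun q => hζmeas _ _ _
  have hPiprod : ∀ (T : Finset ℕ) ω,
      ∏ s ∈ T, Pi s ω = ∏ q ∈ T ×ˢ (Finset.univ : Finset S), ζ q.1 q.2.1.1 q.2.1.2 ω := by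
    intro T ω
    rw [Finset.prod_product]
  have hζprodint : ∀ F : Finset (ℕ × S),
      Integrable (fun ω => ∏ q ∈ F, ζ q.1 q.2.1.1 q.2.1.2 ω) P := by
    intro F
    refine Integrable.mono' (integrable_const (1:ℝ))
      (Finset.measurable_prod F fun q _ => hζqmeas q).aestronglyMeasurable ?_
    refine Filter.Eventually.of_forall fun ω => ?_
    rw [Real.norm_eq_abs, abs_of_nonneg (Finset.prod_nonneg fun q _ => (hζ01 _ _ _ ω).1)]
    exact Finset.prod_le_one (fun q _ => (hζ01 _ _ _ ω).1) (fun q _ => (hζ01 _ _ _ ω).2)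
  have hintT : ∀ T : Finset ℕ, ∫ ω, ∏ s ∈ T, Pi s ω ∂P = p ^ T.card := by
    intro T
    calc ∫ ω, ∏ s ∈ T, Pi s ω ∂P
        = ∫ ω, ∏ q ∈ T ×ˢ (Finset.univ : Finset S), ζ q.1 q.2.1.1 q.2.1.2 ω ∂P :=
          integral_congr_ae (Filter.EventuallyEq.of_eq (funext fun ω => hPiprod T ω))
      _ = ∏ q ∈ T ×ˢ (Finset.univ : Finset S), ∫ ω, ζ q.1 q.2.1.1 q.2.1.2 ω ∂P :=
          integral_finset_prod_of_iIndep _ hζqmeas hζindep _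
      _ = ∏ _q ∈ T ×ˢ (Finset.univ : Finset S), (1 - lam) :=
          Finset.prod_congr rfl fun q _ => hζint q.1 q.2.1.1 q.2.1.2 (ne_of_lt q.2.2)
      _ = p ^ T.card := by
          rw [Finset.prod_const, Finset.card_product, Finset.card_univ, ← hmdef, hpdef,
            mul_comm, pow_mul]
  have hGint_eq : ∀ t, ∫ ω, G t ω ∂P
      = ∏ s ∈ Finset.range t, (1 + (Real.exp (-β s) - 1) * p) := by
    intro t
    have hexpand : ∀ ω, G t ω = ∑ T ∈ (Finset.range t).powerset,
        (∏ s ∈ T, (Real.exp (-β s) - 1)) * ∏ s ∈ T, Pi s ω := by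
      intro ω
      have hg' : ∀ s, g s ω = (Real.exp (-β s) - 1) * Pi s ω + 1 := by
        intro s; simp only [hgdef]; ring
      simp only [hGdef]
      calc ∏ s ∈ Finset.range t, g s ω
          = ∏ s ∈ Finset.range t, ((Real.exp (-β s) - 1) * Pi s ω + 1) :=
            Finset.prod_congr rfl fun s _ => hg' s
        _ = ∑ T ∈ (Finset.range t).powerset,
              (∏ s ∈ T, ((Real.exp (-β s) - 1) * Pi s ω)) * ∏ s ∈ Finset.range t \ T, 1 :=
            Finset.prod_add _ _ _
        _ = ∑ T ∈ (Finset.range t).powerset,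
              (∏ s ∈ T, (Real.exp (-β s) - 1)) * ∏ s ∈ T, Pi s ω := by
            refine Finset.sum_congr rfl fun T _ => ?_
            rw [Finset.prod_const_one, mul_one, Finset.prod_mul_distrib]
    have hintgr : ∀ T : Finset ℕ,
        Integrable (fun ω => (∏ s ∈ T, (Real.exp (-β s) - 1)) * ∏ s ∈ T, Pi s ω) P := by
      intro T
      have := (hζprodint (T ×ˢ (Finset.univ : Finset S))).const_mul
        (∏ s ∈ T, (Real.exp (-β s) - 1))
      refine this.congr (Filter.Eventually.of_forall fun ω => ?_)
      dsimp only
      rw [← hPiprod T ω]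
    calc ∫ ω, G t ω ∂P
        = ∫ ω, ∑ T ∈ (Finset.range t).powerset,
            (∏ s ∈ T, (Real.exp (-β s) - 1)) * ∏ s ∈ T, Pi s ω ∂P :=
          integral_congr_ae (Filter.EventuallyEq.of_eq (funext hexpand))
      _ = ∑ T ∈ (Finset.range t).powerset,
            ∫ ω, (∏ s ∈ T, (Real.exp (-β s) - 1)) * ∏ s ∈ T, Pi s ω ∂P :=
          integral_finset_sum _ fun T _ => hintgr T
      _ = ∑ T ∈ (Finset.range t).powerset,
            (∏ s ∈ T, (Real.exp (-β s) - 1)) * ∫ ω, ∏ s ∈ T, Pi s ω ∂P := by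
          refine Finset.sum_congr rfl fun T _ => ?_
          exact integral_const_mul _ _
      _ = ∑ T ∈ (Finset.range t).powerset,
            (∏ s ∈ T, (Real.exp (-β s) - 1)) * p ^ T.card := by
          refine Finset.sum_congr rfl fun T _ => ?_
          rw [hintT T]
      _ = ∑ T ∈ (Finset.range t).powerset,
            (∏ s ∈ T, ((Real.exp (-β s) - 1) * p)) * ∏ s ∈ Finset.range t \ T, 1 := by
          refine Finset.sum_congr rfl fun T _ => ?_
          rw [Finset.prod_const_one, mul_one, Finset.prod_mul_distrib, Finset.prod_const]
      _ = ∏ s ∈ Finset.range t, ((Real.exp (-β s) - 1) * p + 1) := (Finset.prod_add _ _ _).symm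
      _ = ∏ s ∈ Finset.range t, (1 + (Real.exp (-β s) - 1) * p) := by
          refine Finset.prod_congr rfl fun s _ => ?_
          ring
  -- bound each factor
  have hfac0 : ∀ s:ℕ, 0 ≤ 1 + (Real.exp (-β s) - 1) * p := by
    intro s
    have he1 : Real.exp (-β s) ≤ 1 := Real.exp_le_one_iff.2 (by linarith [hβpos s])
    nlinarith [(Real.exp_pos (-β s)).le]
  have hfac : ∀ s:ℕ, 1 + (Real.exp (-β s) - 1) * p ≤ Real.exp (-(p * β s / 2)) := by
    intro s
    have hb0 := hβpos s
    have hb1 := hβ1 s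
    have he : Real.exp (-β s) ≤ 1 / (1 + β s) := by
      rw [Real.exp_neg]
      rw [inv_eq_one_div]
      exact one_div_le_one_div_of_le (by linarith) (by linarith [Real.add_one_le_exp (β s)])
    have h1 : β s / 2 ≤ 1 - Real.exp (-β s) := by
      have h11 : 1 / (1+β s) ≤ 1 - β s/2 := by
        rw [div_le_iff₀ (by linarith)]
        nlinarith
      linarith [he.trans h11]
    have h2 : (1:ℝ) + (Real.exp (-β s) -1) * p = 1 - p * (1 - Real.exp (-β s)) := by ring
    rw [h2]
    have h3 : p * (β s / 2) ≤ p * (1 - Real.exp (-β s)) := mul_le_mul_of_nonneg_left h1 hp0.le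
    calc 1 - p * (1 - Real.exp (-β s)) ≤ 1 - p * (β s/2) := by linarith
      _ ≤ Real.exp (-(p * β s / 2)) := by
          have h4 := Real.add_one_le_exp (-(p * β s / 2))
          have h5 : p * (β s / 2) = p * β s / 2 := by ring
          linarith
  have hGbound : ∀ t, ∫ ω, G t ω ∂P ≤ Real.exp (-(p/2 * ∑ s ∈ Finset.range t, β s)) := by
    intro t
    rw [hGint_eq]
    calc ∏ s ∈ Finset.range t, (1 + (Real.exp (-β s) - 1) * p)
        ≤ ∏ s ∈ Finset.range t, Real.exp (-(p * β s / 2)) :=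
          Finset.prod_le_prod (fun s _ => hfac0 s) (fun s _ => hfac s)
      _ = Real.exp (∑ s ∈ Finset.range t, -(p * β s / 2)) := (Real.exp_sum _ _).symm
      _ = Real.exp (-(p/2 * ∑ s ∈ Finset.range t, β s)) := by
          congr 1
          have hre : ∀ s ∈ Finset.range t, -(p * β s / 2) = (-(p/2)) * β s :=
            fun s _ => by ring
          rw [Finset.sum_congr rfl hre, ← Finset.mul_sum]
          ring
  -- lower bound on the partial sums of β
  have hAmono : ∀ s t : ℕ, s ≤ t → A t ≤ A s := by
    intro s t hst
    simp only [hAdef]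
    have hst' : (s:ℝ) ≤ (t:ℝ) := Nat.cast_le.2 hst
    refine Real.rpow_le_rpow_of_nonpos (by linarith [hCt s]) ?_ (neg_nonpos.2 hα0)
    nlinarith [hCt s, hC1]
  have hsumβ : ∀ t:ℕ, (t:ℝ) * β t ≤ ∑ s ∈ Finset.range t, β s := by
    intro t
    calc (t:ℝ) * β t = ∑ _s ∈ Finset.range t, β t := by
          rw [Finset.sum_const, Finset.card_range, nsmul_eq_mul]
      _ ≤ ∑ s ∈ Finset.range t, β s := by
          refine Finset.sum_le_sum fun s hs => ?_
          have hst : s ≤ t := (Finset.mem_range.1 hs).le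
          have := hAmono s t hst
          simp only [hβdef]
          nlinarith [mul_pos hk0 hh0]
  set c0 : ℝ := p/2 * ((k:ℝ) * h * C^(-α)) with hc0def
  have hCpos : (0:ℝ) < C := by linarith
  have hc0pos : 0 < c0 := by
    rw [hc0def]
    have := Real.rpow_pos_of_pos hCpos (-α)
    positivity
  clear_value c0
  have hfinal : ∀ t, ∫ ω, G t ω ∂P ≤ Real.exp (-(c0 * (t:ℝ) * (1+(t:ℝ))^(-α))) := by
    intro t
    refine (hGbound t).trans ?_
    rw [Real.exp_le_exp, neg_le_neg_iff]
    have h2 : β t = (k:ℝ)*h*(C^(-α) * (1+(t:ℝ))^(-α)) := by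
      simp only [hβdef, hAdef]
      rw [Real.mul_rpow hCpos.le (by positivity)]
    have h3 : c0 * (t:ℝ) * (1+(t:ℝ))^(-α) = p/2 * ((t:ℝ) * β t) := by
      rw [hc0def, h2]; ring
    rw [h3]
    exact mul_le_mul_of_nonneg_left (hsumβ t) (by linarith)
  -- summability of the sequence of integrals
  have hintnonneg : ∀ t, 0 ≤ ∫ ω, G t ω ∂P :=
    fun t => integral_nonneg fun ω => (hGpos t ω).le
  have hsumint : Summable (fun t => ∫ ω, G t ω ∂P) := by
    have hε : (0:ℝ) < 1 - α := by linarith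
    have hc02 : 0 < c0/2 := by linarith
    refine Summable.of_nonneg_of_le hintnonneg (fun t => ?_)
      (summable_exp_neg_rpow_s13 hc02 hε)
    refine (hfinal t).trans ?_
    rw [Real.exp_le_exp, neg_le_neg_iff]
    rcases Nat.eq_zero_or_pos t with rfl | ht
    · simp [Real.zero_rpow (ne_of_gt hε)]
    · have ht1 : (1:ℝ) ≤ (t:ℝ) := by exact_mod_cast ht
      have ht0 : (0:ℝ) < (t:ℝ) := by linarith
      have hstep1 : ((2:ℝ) * t)^(-α) ≤ (1+(t:ℝ))^(-α) :=
        Real.rpow_le_rpow_of_nonpos (by linarith) (by linarith) (neg_nonpos.2 hα0)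
      have hsplit : ((2:ℝ)*t)^(-α) = 2^(-α) * (t:ℝ)^(-α) :=
        Real.mul_rpow (by norm_num) ht0.le
      have h2a : (1:ℝ)/2 ≤ 2^(-α) := by
        have := Real.rpow_le_rpow_of_exponent_le (by norm_num : (1:ℝ) ≤ 2)
          (by linarith : (-1:ℝ) ≤ -α)
        rwa [Real.rpow_neg_one, show ((2:ℝ))⁻¹ = 1/2 by norm_num] at this
      have htε : (t:ℝ)^(1-α) = (t:ℝ) * (t:ℝ)^(-α) := by
        rw [show (1:ℝ) - α = 1 + (-α) by ring, Real.rpow_add ht0, Real.rpow_one]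
      rw [htε]
      have hr0 : (0:ℝ) ≤ (t:ℝ)^(-α) := Real.rpow_nonneg ht0.le _
      have key1 : c0 * (t:ℝ) * (2^(-α) * (t:ℝ)^(-α)) ≤ c0 * (t:ℝ) * (1+(t:ℝ))^(-α) := by
        refine mul_le_mul_of_nonneg_left ?_ (mul_nonneg hc0pos.le ht0.le)
        rw [← hsplit]; exact hstep1
      have key2 : c0/2 * ((t:ℝ) * (t:ℝ)^(-α)) ≤ c0 * (t:ℝ) * (2^(-α) * (t:ℝ)^(-α)) := by
        have e1 : c0/2 * ((t:ℝ) * (t:ℝ)^(-α)) = (1/2) * (c0 * ((t:ℝ) * (t:ℝ)^(-α))) := by ring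
        have e2 : c0 * (t:ℝ) * (2^(-α) * (t:ℝ)^(-α))
            = 2^(-α) * (c0 * ((t:ℝ) * (t:ℝ)^(-α))) := by ring
        rw [e1, e2]
        exact mul_le_mul_of_nonneg_right h2a
          (mul_nonneg hc0pos.le (mul_nonneg ht0.le hr0))
      linarith
  -- almost-sure summability of G
  have hae : ∀ᵐ ω ∂P, Summable (fun t => G t ω) := by
    have h1 : ∫⁻ ω, ∑' t, ENNReal.ofReal (G t ω) ∂P
        = ∑' t, ∫⁻ ω, ENNReal.ofReal (G t ω) ∂P :=
      lintegral_tsum fun t => ((hGmeas t).ennreal_ofReal).aemeasurable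
    have h2 : ∀ t, ∫⁻ ω, ENNReal.ofReal (G t ω) ∂P = ENNReal.ofReal (∫ ω, G t ω ∂P) :=
      fun t => (ofReal_integral_eq_lintegral_ofReal (hGint t)
        (Filter.Eventually.of_forall fun ω => (hGpos t ω).le)).symm
    have h3 : ∑' t, ENNReal.ofReal (∫ ω, G t ω ∂P)
        = ENNReal.ofReal (∑' t, ∫ ω, G t ω ∂P) :=
      (ENNReal.ofReal_tsum_of_nonneg hintnonneg hsumint).symm
    have h4 : ∫⁻ ω, ∑' t, ENNReal.ofReal (G t ω) ∂P ≠ ⊤ := by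
      rw [h1]
      simp_rw [h2]
      rw [h3]
      exact ENNReal.ofReal_ne_top
    have h5 := ae_lt_top (Measurable.ennreal_tsum fun t => (hGmeas t).ennreal_ofReal) h4
    filter_upwards [h5] with ω hω
    have h6 : Summable (fun t => (G t ω).toNNReal) := by
      rw [← ENNReal.tsum_coe_ne_top_iff_summable]
      exact ne_of_lt hω
    have h7 := NNReal.summable_coe.2 h6
    refine h7.congr fun t => ?_
    exact Real.coe_toNNReal _ (hGpos t ω).le
  -- conclusion
  filter_upwards [hae] with ω hω
  refine Summable.of_nonneg_of_le (fun t => Real.sqrt_nonneg _) (fun t => ?_) (hω.mul_right B0)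
  exact hNle t ω
end
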